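/- arXiv:2210.12821 — 9 statements merged into one kernel-verified Lean document; each statement's English description precedes it below -/
import Mathlib

section
/- Let q ≥ 5 be an odd prime power with q ≡ -1 (mod 3). Then there is exactly one β ∈ F_q for which the cubic polynomial t³ - 3βt² - 1 has exactly two roots in F_q, and there are exactly (q-1)/2 elements β ∈ F_q for which it has exactly one root in F_q. -/
open Finset

section Aux

variable {F : Type*} [Field F]

/-- a root of the cubic is nonzero -/
lemma aux_root_ne_zero {β t : F} (h : t ^ 3 - 3 * β * t ^ 2 - 1 = 0) : t ≠ 0 := by
  rintro rfl
  norm_num at h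

/-- if `1 - 4t³` is not a square and `t` is a root, then `t` is the only root -/
lemma aux_unique_root {β t : F} (hβt : t ^ 3 - 3 * β * t ^ 2 - 1 = 0)
    (hns : ¬ IsSquare (1 - 4 * t ^ 3)) :
    {s : F | s ^ 3 - 3 * β * s ^ 2 - 1 = 0} = {t} := by
  ext s
  simp only [Set.mem_setOf_eq, Set.mem_singleton_iff]
  constructor
  · intro hs
    have key : (s - t) * (t ^ 2 * s ^ 2 + s + t) = 0 := by
      linear_combination t ^ 2 * hs - s ^ 2 * hβt
    rcases mul_eq_zero.1 key with h | hq
    · exact sub_eq_zero.1 h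
    · exact absurd ⟨2 * t ^ 2 * s + 1, by linear_combination (-4 * t ^ 2) * hq⟩ hns
  · rintro rfl; exact hβt

/-- a root of the auxiliary quadratic is a root of the cubic -/
lemma aux_quad_root {β t s : F} (ht : t ≠ 0) (hβt : t ^ 3 - 3 * β * t ^ 2 - 1 = 0)
    (hq : t ^ 2 * s ^ 2 + s + t = 0) : s ^ 3 - 3 * β * s ^ 2 - 1 = 0 := by
  have hmul : t ^ 2 * (s ^ 3 - 3 * β * s ^ 2 - 1) = 0 := by
    linear_combination (s - t) * hq + s ^ 2 * hβt
  rcases mul_eq_zero.1 hmul with h | h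
  · exact absurd ((pow_eq_zero_iff two_ne_zero).1 h) ht
  · exact h

/-- if `1 - 4t³` is a square and `t` is a root, there is a second root -/
lemma aux_second_root (h2 : (2 : F) ≠ 0) (h3 : (3 : F) ≠ 0) {β t : F}
    (hβt : t ^ 3 - 3 * β * t ^ 2 - 1 = 0) (hsq : IsSquare (1 - 4 * t ^ 3)) :
    ∃ s : F, s ≠ t ∧ s ^ 3 - 3 * β * s ^ 2 - 1 = 0 := by
  have ht : t ≠ 0 := aux_root_ne_zero hβt
  haveI : NeZero (2 : F) := ⟨h2⟩
  have ht2 : (t : F) ^ 2 ≠ 0 := pow_ne_zero _ ht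
  obtain ⟨c, hc⟩ := hsq
  obtain ⟨s, hs⟩ := exists_quadratic_eq_zero (a := t ^ 2) (b := 1) (c := t) ht2
    ⟨c, by rw [discrim]; linear_combination hc⟩
  have hq : t ^ 2 * s ^ 2 + s + t = 0 := by linear_combination hs
  rcases eq_or_ne s t with heq | hst
  · -- the quadratic root happened to be `t` itself; then `t³ = -2` and `1/t²` works
    subst heq
    have ht3 : s ^ 3 = -2 := by
      have h0 : s * (s ^ 3 + 2) = 0 := by linear_combination hq
      rcases mul_eq_zero.1 h0 with h | h
      · exact absurd h ht
      · linear_combination h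
    refine ⟨(s ^ 2)⁻¹, ?_, ?_⟩
    · intro heq
      have h1 : (1 : F) = s ^ 3 := by
        field_simp at heq
        linear_combination heq
      rw [ht3] at h1
      exact h3 (by linear_combination h1)
    · refine aux_quad_root ht hβt ?_
      have key : s ^ 2 * ((s ^ 2)⁻¹) ^ 2 + (s ^ 2)⁻¹ + s = (s ^ 3 + 2) / s ^ 2 := by
        field_simp
        ring
      rw [key, ht3]
      simp
  · exact ⟨s, hst, aux_quad_root ht hβt hq⟩

end Aux

lemma aux_card_nonsquare (F : Type*) [Field F] [Fintype F] [DecidableEq F]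
    (hchar2 : ringChar F ≠ 2) :
    2 * ({x : F | ¬ IsSquare x}).ncard + 1 = Fintype.card F := by
  classical
  have hsum := quadraticChar_sum_zero (F := F) hchar2
  set SQ : Finset F := Finset.univ.filter (fun a => IsSquare a) with hSQ
  set NS : Finset F := Finset.univ.filter (fun a => ¬ IsSquare a) with hNS
  have hsplit : ∑ a ∈ SQ, quadraticChar F a + ∑ a ∈ NS, quadraticChar F a = 0 := by
    rw [hSQ, hNS, Finset.sum_filter_add_sum_filter_not]
    exact hsum
  have h0S : (0 : F) ∈ SQ := by simp [hSQ]
  have hSQsum : ∑ a ∈ SQ, quadraticChar F a = (SQ.card : ℤ) - 1 := by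
    rw [← Finset.sum_erase_add _ _ h0S, quadraticChar_zero, add_zero]
    have : ∀ a ∈ SQ.erase 0, quadraticChar F a = 1 := by
      intro a ha
      have ha0 : a ≠ 0 := Finset.ne_of_mem_erase ha
      have hsq : IsSquare a := by
        have := Finset.mem_of_mem_erase ha
        simpa [hSQ] using this
      exact (quadraticChar_one_iff_isSquare ha0).mpr hsq
    rw [Finset.sum_congr rfl this, Finset.sum_const, Finset.card_erase_of_mem h0S]
    have hpos : 0 < SQ.card := Finset.card_pos.2 ⟨0, h0S⟩
    simp
    omega
  have hNSsum : ∑ a ∈ NS, quadraticChar F a = -(NS.card : ℤ) := by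
    have : ∀ a ∈ NS, quadraticChar F a = -1 := by
      intro a ha
      exact quadraticChar_neg_one_iff_not_isSquare.mpr (by simpa [hNS] using ha)
    rw [Finset.sum_congr rfl this, Finset.sum_const]
    simp
  have hcards : SQ.card + NS.card = Fintype.card F := by
    rw [hSQ, hNS]
    rw [Finset.card_filter_add_card_filter_not, Finset.card_univ]
  have hncard : ({x : F | ¬ IsSquare x}).ncard = NS.card := by
    rw [Set.ncard_eq_toFinset_card']
    simp [hNS]
  rw [hSQsum, hNSsum] at hsplit
  rw [hncard]
  omega


/-- Let `q ≥ 5` be an odd prime power with `q ≡ -1 (mod 3)`. Then there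
is exactly one `β ∈ F_q` for which `t³ - 3βt² - 1` has exactly two roots in `F_q`, and
exactly `(q-1)/2` elements `β` for which it has exactly one root in `F_q`. -/
theorem stmt0 (q : ℕ) (hq5 : 5 ≤ q) (hodd : Odd q) (hq3 : q % 3 = 2)
    (F : Type*) [Field F] [Fintype F] (hcard : Fintype.card F = q) :
    ({β : F | ({t : F | t ^ 3 - 3 * β * t ^ 2 - 1 = 0} : Set F).ncard = 2} : Set F).ncard = 1 ∧
    ({β : F | ({t : F | t ^ 3 - 3 * β * t ^ 2 - 1 = 0} : Set F).ncard = 1} : Set F).ncard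
      = (q - 1) / 2 := by
  classical
  -- characteristic facts
  have hq0 : ((q : ℕ) : F) = 0 := by rw [← hcard]; exact FiniteField.cast_card_eq_zero F
  have hdq : ringChar F ∣ q := (ringChar.spec F q).mp hq0
  have hchar1 : ringChar F ≠ 1 := by
    intro h1
    have : ((1 : ℕ) : F) = 0 := (ringChar.spec F 1).mpr (h1 ▸ dvd_refl _)
    simp at this
  have h2 : (2 : F) ≠ 0 := by
    intro h
    have hd2 : ringChar F ∣ 2 := (ringChar.spec F 2).mp (by exact_mod_cast h)
    have he : ringChar F = 2 := ((Nat.dvd_prime Nat.prime_two).mp hd2).resolve_left hchar1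
    rw [he] at hdq
    obtain ⟨k, hk⟩ := hdq
    obtain ⟨m, hm⟩ := hodd
    omega
  have h3 : (3 : F) ≠ 0 := by
    intro h
    have hd3 : ringChar F ∣ 3 := (ringChar.spec F 3).mp (by exact_mod_cast h)
    have he : ringChar F = 3 := ((Nat.dvd_prime Nat.prime_three).mp hd3).resolve_left hchar1
    rw [he] at hdq
    obtain ⟨k, hk⟩ := hdq
    omega
  have hchar2 : ringChar F ≠ 2 := by
    intro h
    have : ((2 : ℕ) : F) = 0 := (ringChar.spec F 2).mpr (h ▸ dvd_refl _)
    exact h2 (by exact_mod_cast this)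
  have h4ne : (4 : F) ≠ 0 := by
    intro h
    have h22 : (2 : F) * 2 = 0 := by linear_combination h
    rcases mul_eq_zero.1 h22 with h' | h' <;> exact h2 h'
  -- the cube map is a bijection
  have hcop : (Nat.card Fˣ).Coprime 3 := by
    rw [Nat.card_eq_fintype_card, Fintype.card_units, hcard, Nat.coprime_comm,
      Nat.Prime.coprime_iff_not_dvd Nat.prime_three]
    rintro ⟨k, hk⟩
    omega
  have cube_inj : ∀ x y : F, x ^ 3 = y ^ 3 → x = y := by
    intro x y h
    rcases eq_or_ne x 0 with rfl | hx
    · rcases eq_or_ne y 0 with rfl | hy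
      · rfl
      · have hy3 : y ^ 3 = 0 := by simpa using h.symm
        exact absurd ((pow_eq_zero_iff three_ne_zero).mp hy3) hy
    · rcases eq_or_ne y 0 with rfl | hy
      · have hx3 : x ^ 3 = 0 := by simpa using h
        exact absurd ((pow_eq_zero_iff three_ne_zero).mp hx3) hx
      · have hu : (Units.mk0 x hx) ^ 3 = (Units.mk0 y hy) ^ 3 := by
          ext
          push_cast
          exact h
        have := (powCoprime hcop).injective (by simpa [powCoprime_apply] using hu)
        simpa [Units.ext_iff] using this
  have cube_surj : Function.Surjective (fun x : F => x ^ 3) :=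
    Finite.surjective_of_injective (fun a b hab => cube_inj a b hab)
  -- the distinguished element t₀ with 4·t₀³ = 1
  obtain ⟨t₀, ht₀⟩ := cube_surj (4 : F)⁻¹
  simp only at ht₀
  have h4t₀ : 4 * t₀ ^ 3 = 1 := by rw [ht₀]; exact mul_inv_cancel₀ h4ne
  have ht₀0 : t₀ ≠ 0 := by
    rintro rfl
    norm_num at h4t₀
  have hne12 : t₀ ≠ -2 * t₀ := by
    intro h
    have h30 : (3 : F) * t₀ = 0 := by linear_combination h
    rcases mul_eq_zero.1 h30 with h' | h'
    · exact h3 h'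
    · exact ht₀0 h'
  -- the root set of β₀ = -t₀
  have hR0 : {s : F | s ^ 3 - 3 * (-t₀) * s ^ 2 - 1 = 0} = {t₀, -2 * t₀} := by
    ext s
    simp only [Set.mem_setOf_eq, Set.mem_insert_iff, Set.mem_singleton_iff]
    constructor
    · intro hs
      have key : (s - t₀) * (s + 2 * t₀) ^ 2 = 0 := by linear_combination hs - h4t₀
      rcases mul_eq_zero.1 key with h | h
      · exact Or.inl (sub_eq_zero.1 h)
      · right
        have h0 := (pow_eq_zero_iff two_ne_zero).1 h
        linear_combination h0
    · rintro (rfl | rfl)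
      · linear_combination h4t₀
      · linear_combination h4t₀
  -- Part 1 : the β's with exactly two roots form {-t₀}
  have hA2 : ({β : F | ({t : F | t ^ 3 - 3 * β * t ^ 2 - 1 = 0} : Set F).ncard = 2} : Set F)
      = {-t₀} := by
    ext β
    simp only [Set.mem_setOf_eq, Set.mem_singleton_iff]
    constructor
    · intro hβ
      obtain ⟨a, b, hab, hRab⟩ := Set.ncard_eq_two.1 hβ
      have ha : a ^ 3 - 3 * β * a ^ 2 - 1 = 0 := by
        have : a ∈ ({a, b} : Set F) := Set.mem_insert _ _
        rw [← hRab] at this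
        exact this
      have hb : b ^ 3 - 3 * β * b ^ 2 - 1 = 0 := by
        have : b ∈ ({a, b} : Set F) := Set.mem_insert_of_mem _ rfl
        rw [← hRab] at this
        exact this
      have ha0 := aux_root_ne_zero ha
      have hb0 := aux_root_ne_zero hb
      have key : (a - b) * (b ^ 2 * a ^ 2 + a + b) = 0 := by
        linear_combination b ^ 2 * ha - a ^ 2 * hb
      have hq' : b ^ 2 * a ^ 2 + a + b = 0 :=
        (mul_eq_zero.1 key).resolve_left (sub_ne_zero.2 hab)
      have hba : b * a ≠ 0 := mul_ne_zero hb0 ha0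
      have hq'' : b ^ 2 * ((b * a)⁻¹) ^ 2 + (b * a)⁻¹ + b = 0 := by
        have expand : b ^ 2 * ((b * a)⁻¹) ^ 2 + (b * a)⁻¹ + b
            = (b ^ 2 * a ^ 2 + a + b) / (b * a ^ 2) := by
          field_simp
          ring
        rw [expand, hq', zero_div]
      have hroots' : ((b * a)⁻¹) ^ 3 - 3 * β * ((b * a)⁻¹) ^ 2 - 1 = 0 :=
        aux_quad_root hb0 hb hq''
      have hmem : (b * a)⁻¹ ∈ ({a, b} : Set F) := by
        rw [← hRab]
        exact hroots'
      rcases hmem with h | h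
      · -- third root equals a : then b = t₀ and β = -t₀
        have hab1 : b * a ^ 2 = 1 := by
          have := congrArg (fun z => z * (b * a)) h
          rw [inv_mul_cancel₀ hba] at this
          linear_combination -this
        have hstep : b * (a + 2 * b) = 0 := by
          linear_combination b * hq' - b ^ 2 * hab1
        have ha2 : a = -2 * b := by
          have := (mul_eq_zero.1 hstep).resolve_left hb0
          linear_combination this
        have h4b : 4 * b ^ 3 = 1 := by
          linear_combination hab1 - b * (a - 2 * b) * ha2
        have hb3 : b ^ 3 = t₀ ^ 3 := by
          have h44 : (4 : F) * (b ^ 3 - t₀ ^ 3) = 0 := by linear_combination h4b - h4t₀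
          have := (mul_eq_zero.1 h44).resolve_left h4ne
          linear_combination this
        have hbt : b = t₀ := cube_inj _ _ hb3
        subst hbt
        have h30 : 3 * b ^ 2 * (β + b) = 0 := by linear_combination -hb + h4b
        have h3b : (3 : F) * b ^ 2 ≠ 0 := mul_ne_zero h3 (pow_ne_zero 2 hb0)
        have := (mul_eq_zero.1 h30).resolve_left h3b
        linear_combination this
      · -- third root equals b : then b³ = -2 and β = -t₀
        have hab1 : b ^ 2 * a = 1 := by
          have := congrArg (fun z => z * (b * a)) h
          rw [inv_mul_cancel₀ hba] at this
          linear_combination -this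
        have hb3 : b ^ 3 = -2 := by
          linear_combination b ^ 2 * hq' - (b ^ 2 * a + 2) * hab1
        have hββ : β * b ^ 2 = -1 := by
          have h30 : (3 : F) * (β * b ^ 2 + 1) = 0 := by linear_combination -hb + hb3
          have := (mul_eq_zero.1 h30).resolve_left h3
          linear_combination this
        have hb6 : b ^ 6 = 4 := by linear_combination (b ^ 3 - 2) * hb3
        have hneg3 : (-β) ^ 3 * b ^ 6 = 1 := by
          linear_combination (-((β * b ^ 2) ^ 2 - β * b ^ 2 + 1)) * hββ
        have hneg : (-β) ^ 3 = t₀ ^ 3 := by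
          rw [hb6] at hneg3
          rw [ht₀]
          field_simp
          linear_combination hneg3
        have hfin : -β = t₀ := cube_inj _ _ hneg
        linear_combination -hfin
    · rintro rfl
      rw [hR0]
      exact Set.ncard_pair hne12
  refine ⟨by rw [hA2]; exact Set.ncard_singleton _, ?_⟩
  -- Part 2 : the β's with exactly one root
  set φ : F → F := fun t => (t ^ 3 - 1) / (3 * t ^ 2) with hφ
  have hroot_phi : ∀ t : F, t ≠ 0 → t ^ 3 - 3 * (φ t) * t ^ 2 - 1 = 0 := by
    intro t ht
    rw [hφ]
    field_simp
    ring
  have hphi_eq : ∀ (β t : F), t ^ 3 - 3 * β * t ^ 2 - 1 = 0 → φ t = β := by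
    intro β t h
    have ht := aux_root_ne_zero h
    rw [hφ]
    field_simp
    linear_combination h
  set S : Set F := {t : F | ¬ IsSquare (1 - 4 * t ^ 3)} with hS
  have hS0 : ∀ t ∈ S, t ≠ 0 := by
    intro t htS
    rintro rfl
    apply htS
    show IsSquare (1 - 4 * (0 : F) ^ 3)
    have h01 : (1 : F) - 4 * 0 ^ 3 = 1 := by norm_num
    rw [h01]
    exact IsSquare.one
  have hA1 : ({β : F | ({t : F | t ^ 3 - 3 * β * t ^ 2 - 1 = 0} : Set F).ncard = 1} : Set F)
      = φ '' S := by
    ext β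
    simp only [Set.mem_setOf_eq, Set.mem_image]
    constructor
    · intro hβ
      obtain ⟨t, hRt⟩ := Set.ncard_eq_one.1 hβ
      have htroot : t ^ 3 - 3 * β * t ^ 2 - 1 = 0 := by
        have : t ∈ ({t} : Set F) := rfl
        rw [← hRt] at this
        exact this
      have htS : t ∈ S := by
        simp only [hS, Set.mem_setOf_eq]
        intro hsq
        obtain ⟨s, hst, hs⟩ := aux_second_root h2 h3 htroot hsq
        have : s ∈ ({t} : Set F) := by rw [← hRt]; exact hs
        exact hst this
      exact ⟨t, htS, hphi_eq β t htroot⟩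
    · rintro ⟨t, htS, rfl⟩
      have ht0 := hS0 t htS
      have hroot := hroot_phi t ht0
      have hns : ¬ IsSquare (1 - 4 * t ^ 3) := htS
      rw [aux_unique_root hroot hns]
      exact Set.ncard_singleton t
  have hinj : Set.InjOn φ S := by
    intro t ht t' ht' heq
    have h1 := hroot_phi t (hS0 t ht)
    have h1' := hroot_phi t' (hS0 t' ht')
    rw [← heq] at h1'
    have hns : ¬ IsSquare (1 - 4 * t ^ 3) := ht
    have hsingle := aux_unique_root h1 hns
    have : t' ∈ {s : F | s ^ 3 - 3 * (φ t) * s ^ 2 - 1 = 0} := h1'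
    rw [hsingle] at this
    exact this.symm
  rw [hA1, Set.ncard_image_of_injOn hinj]
  -- S is carried to the set of nonsquares by the bijection t ↦ 1 - 4t³
  have hψinj : Function.Injective (fun t : F => 1 - 4 * t ^ 3) := by
    intro x y hxy
    simp only at hxy
    apply cube_inj
    have h44 : (4 : F) * (x ^ 3 - y ^ 3) = 0 := by linear_combination -hxy
    have := (mul_eq_zero.1 h44).resolve_left h4ne
    linear_combination this
  have hψbij : Function.Bijective (fun t : F => 1 - 4 * t ^ 3) :=
    ⟨hψinj, Finite.surjective_of_injective hψinj⟩
  have hScard : S.ncard = ({x : F | ¬ IsSquare x}).ncard := by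
    have hpre : S = (Equiv.ofBijective _ hψbij) ⁻¹' {x : F | ¬ IsSquare x} := rfl
    rw [hpre, ← Equiv.image_symm_eq_preimage]
    exact Set.ncard_image_of_injective _ (Equiv.ofBijective _ hψbij).symm.injective
  rw [hScard]
  have hcount := aux_card_nonsquare F hchar2
  rw [hcard] at hcount
  have hq2 : q % 2 = 1 := Nat.odd_iff.1 hodd
  omega
end

section
/- Let q ≥ 5 be an odd prime power with q ≡ 1 (mod 3) such that 2 is a cube in F_q. Then there are exactly three β ∈ F_q for which the cubic polynomial t³ - 3βt² - 1 has exactly two roots in F_q, and the number of β ∈ F_q for which it has exactly one root in F_q equals the number of β ∈ F_q with η(1 + 4β³) = -1. -/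
open scoped Classical

/-- The quadratic character of a field: `η a = 1` if `a` is a nonzero square,
`η a = -1` if `a` is a non-square, and `η 0 = 0`. -/
noncomputable def quadChar (F : Type*) [Field F] (a : F) : ℤ :=
  if a = 0 then 0 else if IsSquare a then 1 else -1

section AuxStmt2

lemma cube_roots_of_unity {K₀ : Type*} [Field K₀] {ω y : K₀} (hω3 : ω ^ 3 = 1) (hω1 : ω ≠ 1)
    (hy : y ^ 3 = 1) : y = 1 ∨ y = ω ∨ y = ω ^ 2 := by
  have hsum : ω ^ 2 + ω + 1 = 0 := by
    have h : (ω - 1) * (ω ^ 2 + ω + 1) = 0 := by linear_combination hω3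
    rcases mul_eq_zero.mp h with h | h
    · exact absurd (by linear_combination h) hω1
    · exact h
  have h : (y - 1) * ((y - ω) * (y - ω ^ 2)) = 0 := by
    linear_combination hy + (y - y ^ 2) * hsum + (y - 1) * hω3
  rcases mul_eq_zero.mp h with h | h
  · exact Or.inl (by linear_combination h)
  rcases mul_eq_zero.mp h with h | h
  · exact Or.inr (Or.inl (by linear_combination h))
  · exact Or.inr (Or.inr (by linear_combination h))

lemma omega_sq_sum {K₀ : Type*} [Field K₀] {ω : K₀} (hω3 : ω ^ 3 = 1) (hω1 : ω ≠ 1) :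
    ω ^ 2 + ω + 1 = 0 := by
  have h : (ω - 1) * (ω ^ 2 + ω + 1) = 0 := by linear_combination hω3
  rcases mul_eq_zero.mp h with h | h
  · exact absurd (by linear_combination h) hω1
  · exact h

variable {F : Type*} [Field F]

lemma quadChar_eq_neg_one_iff (a : F) : quadChar F a = -1 ↔ ¬ IsSquare a := by
  unfold quadChar
  by_cases h0 : a = 0
  · subst h0; simp [(⟨0, by ring⟩ : IsSquare (0:F))]
  · by_cases hs : IsSquare a <;> simp [h0, hs]

lemma quadChar_mul_sq (a e : F) (he : e ≠ 0) : quadChar F (a * e ^ 2) = quadChar F a := by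
  unfold quadChar
  have h0 : a * e ^ 2 = 0 ↔ a = 0 := by
    constructor
    · intro h
      rcases mul_eq_zero.mp h with h | h
      · exact h
      · exact absurd (pow_eq_zero_iff (by norm_num) |>.mp h) he
    · intro h; rw [h, zero_mul]
  have hsq : IsSquare (a * e ^ 2) ↔ IsSquare a := by
    constructor
    · rintro ⟨c, hc⟩
      exact ⟨c / e, by field_simp at hc ⊢; linear_combination hc⟩
    · rintro ⟨c, hc⟩
      exact ⟨c * e, by rw [hc]; ring⟩
  rw [if_congr h0 rfl rfl, if_congr hsq rfl rfl]

lemma two_roots_rel {β r1 r2 : F} (hr1 : r1 ^ 3 - 3 * β * r1 ^ 2 - 1 = 0)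
    (hr2 : r2 ^ 3 - 3 * β * r2 ^ 2 - 1 = 0) (hne : r1 ≠ r2) :
    r1 * r2 + r2 * (3 * β - r1 - r2) + (3 * β - r1 - r2) * r1 = 0 ∧
      r1 * r2 * (3 * β - r1 - r2) = 1 := by
  have hd : r1 - r2 ≠ 0 := sub_ne_zero.mpr hne
  have hA : r1 ^ 2 + r1 * r2 + r2 ^ 2 = 3 * β * (r1 + r2) := by
    apply mul_left_cancel₀ hd
    linear_combination hr1 - hr2
  exact ⟨by linear_combination -hA, by linear_combination hr1 - r1 * hA⟩

/-- If the cubic has two distinct roots, `1 + 4β³` is a square. -/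
lemma isSquare_of_two_roots {β r1 r2 s : F} (h3 : (3 : F) ≠ 0) (hs : s ^ 2 = -3)
    (hr1 : r1 ^ 3 - 3 * β * r1 ^ 2 - 1 = 0) (hr2 : r2 ^ 3 - 3 * β * r2 ^ 2 - 1 = 0)
    (hne : r1 ≠ r2) : IsSquare (1 + 4 * β ^ 3) := by
  obtain ⟨he2, he3⟩ := two_roots_rel hr1 hr2 hne
  set u := 3 * β - r1 - r2 with hu
  have hs0 : s ≠ 0 := by
    intro h; rw [h] at hs; norm_num at hs
    exact h3 hs
  have h27 : s ^ 3 * s ^ 3 = -27 := by linear_combination (s ^ 4 - 3 * s ^ 2 + 9) * hs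
  have key : (1 + 4 * β ^ 3) * (s ^ 3 * s ^ 3) = ((r1 - r2) * (r2 - u) * (u - r1)) ^ 2 := by
    linear_combination (1 + 4 * β ^ 3) * h27 -
      (9 * β ^ 2 * (r1 * r2 + r2 * u + u * r1) - 4 * (r1 * r2 + r2 * u + u * r1) ^ 2 +
        54 * β * (r1 * r2 * u)) * he2 -
      (-108 * β ^ 3 - 27 * (r1 * r2 * u + 1)) * he3
  refine ⟨(r1 - r2) * (r2 - u) * (u - r1) * (s ^ 3)⁻¹, ?_⟩
  have hs3 : s ^ 3 ≠ 0 := pow_ne_zero _ hs0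
  field_simp
  linear_combination key

/-- If the cubic has exactly one root, the quadratic character of `1+4β³` is `-1`. -/
lemma quadChar_of_unique_root {β s : F} (h2 : (2 : F) ≠ 0) (h3 : (3 : F) ≠ 0)
    (hs : s ^ 2 = -3)
    (hone : ({t : F | t ^ 3 - 3 * β * t ^ 2 - 1 = 0} : Set F).ncard = 1) :
    quadChar F (1 + 4 * β ^ 3) = -1 := by
  obtain ⟨r, hset⟩ := Set.ncard_eq_one.mp hone
  have hr : r ^ 3 - 3 * β * r ^ 2 - 1 = 0 := by
    have : r ∈ ({t : F | t ^ 3 - 3 * β * t ^ 2 - 1 = 0} : Set F) := by rw [hset]; rfl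
    exact this
  have huniq : ∀ t : F, t ^ 3 - 3 * β * t ^ 2 - 1 = 0 → t = r := by
    intro t ht
    have : t ∈ ({t : F | t ^ 3 - 3 * β * t ^ 2 - 1 = 0} : Set F) := ht
    rw [hset] at this
    exact this
  have hs0 : s ≠ 0 := by
    intro h; rw [h] at hs; norm_num at hs
    exact h3 hs
  have h27 : s ^ 3 * s ^ 3 = -27 := by linear_combination (s ^ 4 - 3 * s ^ 2 + 9) * hs
  set p : F := r - 3 * β with hp
  set c : F := r ^ 2 - 3 * β * r with hc
  have hid : ∀ t : F, t ^ 3 - 3 * β * t ^ 2 - 1 = (t - r) * (t ^ 2 + p * t + c) := by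
    intro t; rw [hp, hc]; linear_combination hr
  -- the quadratic has no roots
  have hquad : ∀ z : F, z ^ 2 + p * z + c ≠ 0 := by
    intro z hz
    have hzr : z = r := by
      apply huniq
      rw [hid z, hz, mul_zero]
    rw [hzr] at hz
    -- other root of the quadratic
    have hz' : (-p - r) ^ 2 + p * (-p - r) + c = 0 := by linear_combination hz
    have hzr' : -p - r = r := by
      apply huniq
      rw [hid (-p - r), hz', mul_zero]
    have hβr : β = r := by
      apply mul_left_cancel₀ h3
      rw [hp] at hzr'
      linear_combination hzr'
    rw [hp, hc, hβr] at hz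
    have hr0 : r = 0 := by
      have h9 : (3 : F) * (3 * (r * r)) = 0 := by linear_combination -3 * hz
      have := mul_eq_zero.mp h9
      rcases this with h | h
      · exact absurd h h3
      · rcases mul_eq_zero.mp h with h | h
        · exact absurd h h3
        · rcases mul_eq_zero.mp h with h | h <;> exact h
    rw [hβr, hr0] at hr
    norm_num at hr
  -- the discriminant of the quadratic is a nonsquare
  have hd : ¬ IsSquare (p ^ 2 - 4 * c) := by
    rintro ⟨e, he⟩
    apply hquad ((e - p) / 2)
    field_simp
    linear_combination -he
  set m : F := r ^ 2 + p * r + c with hm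
  have hm0 : m ≠ 0 := hquad r
  have key : (1 + 4 * β ^ 3) * (s ^ 3 * s ^ 3) = (p ^ 2 - 4 * c) * m ^ 2 := by
    rw [hm, hp, hc]
    linear_combination (1 + 4 * β ^ 3) * h27 +
      27 * (r ^ 3 - 3 * β * r ^ 2 + 4 * β ^ 3 + 1) * hr
  have hs3 : s ^ 3 ≠ 0 := pow_ne_zero _ hs0
  have hfin : 1 + 4 * β ^ 3 = (p ^ 2 - 4 * c) * (m * (s ^ 3)⁻¹) ^ 2 := by
    field_simp
    linear_combination key
  rw [hfin, quadChar_mul_sq _ _ (mul_ne_zero hm0 (inv_ne_zero hs3))]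
  · exact (quadChar_eq_neg_one_iff _).mpr hd


lemma factorization_of_two_roots {β r1 r2 : F} (hr1 : r1 ^ 3 - 3 * β * r1 ^ 2 - 1 = 0)
    (hr2 : r2 ^ 3 - 3 * β * r2 ^ 2 - 1 = 0) (hne : r1 ≠ r2) (t : F) :
    t ^ 3 - 3 * β * t ^ 2 - 1 = (t - r1) * (t - r2) * (t - (3 * β - r1 - r2)) := by
  obtain ⟨he2, he3⟩ := two_roots_rel hr1 hr2 hne
  linear_combination (-t) * he2 + he3

lemma ncard_two_iff {β : F} (h3 : (3 : F) ≠ 0) :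
    ({t : F | t ^ 3 - 3 * β * t ^ 2 - 1 = 0} : Set F).ncard = 2 ↔ 1 + 4 * β ^ 3 = 0 := by
  constructor
  · intro h
    obtain ⟨r1, r2, hne, hset⟩ := Set.ncard_eq_two.mp h
    have hr1 : r1 ^ 3 - 3 * β * r1 ^ 2 - 1 = 0 := by
      have : r1 ∈ ({t : F | t ^ 3 - 3 * β * t ^ 2 - 1 = 0} : Set F) := by
        rw [hset]; left; rfl
      exact this
    have hr2 : r2 ^ 3 - 3 * β * r2 ^ 2 - 1 = 0 := by
      have : r2 ∈ ({t : F | t ^ 3 - 3 * β * t ^ 2 - 1 = 0} : Set F) := by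
        rw [hset]; right; rfl
      exact this
    obtain ⟨he2, he3⟩ := two_roots_rel hr1 hr2 hne
    set u := 3 * β - r1 - r2 with hu
    have hfu : u ^ 3 - 3 * β * u ^ 2 - 1 = 0 := by
      rw [factorization_of_two_roots hr1 hr2 hne u]; ring
    have hmem : u ∈ ({t : F | t ^ 3 - 3 * β * t ^ 2 - 1 = 0} : Set F) := hfu
    rw [hset] at hmem
    rcases hmem with hu1 | hu2
    · -- u = r1
      have hu1 : u = r1 := hu1
      rw [hu1] at he2 he3
      -- he2 : r1*r2 + r2*r1 + r1*r1 = 0, he3 : r1*r2*r1 = 1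
      have hr1ne : r1 ≠ 0 := by
        intro h0; rw [h0] at he3; simp at he3
      have hfac : r1 * (2 * r2 + r1) = 0 := by linear_combination he2
      have hr1eq : r1 = -2 * r2 := by
        rcases mul_eq_zero.mp hfac with h | h
        · exact absurd h hr1ne
        · linear_combination h
      have hβ : β = -r2 := by
        apply mul_left_cancel₀ h3
        have : u = r1 := hu1
        rw [hu] at this
        linear_combination this + 2 * hr1eq
      linear_combination -he3 + r2 * (r1 - 2 * r2) * hr1eq + 4 * (β ^ 2 - β * r2 + r2 ^ 2) * hβ
    · have hu2 : u = r2 := hu2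
      rw [hu2] at he2 he3
      have hr2ne : r2 ≠ 0 := by
        intro h0; rw [h0] at he3; simp at he3
      have hfac : r2 * (2 * r1 + r2) = 0 := by linear_combination he2
      have hr2eq : r2 = -2 * r1 := by
        rcases mul_eq_zero.mp hfac with h | h
        · exact absurd h hr2ne
        · linear_combination h
      have hβ : β = -r1 := by
        apply mul_left_cancel₀ h3
        have : u = r2 := hu2
        rw [hu] at this
        linear_combination this + 2 * hr2eq
      linear_combination -he3 + r1 * (r2 - 2 * r1) * hr2eq + 4 * (β ^ 2 - β * r1 + r1 ^ 2) * hβ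
  · intro h
    have hβ0 : β ≠ 0 := by
      intro h0; rw [h0] at h; norm_num at h
    have hne : 2 * β ≠ -β := by
      intro heq
      apply hβ0
      apply mul_left_cancel₀ h3
      linear_combination heq
    have hset : ({t : F | t ^ 3 - 3 * β * t ^ 2 - 1 = 0} : Set F) = {2 * β, -β} := by
      ext t
      have hid : t ^ 3 - 3 * β * t ^ 2 - 1 = (t - 2 * β) ^ 2 * (t + β) := by
        linear_combination -h
      simp only [Set.mem_setOf_eq, Set.mem_insert_iff, Set.mem_singleton_iff, hid]
      constructor
      · intro h0
        rcases mul_eq_zero.mp h0 with h0 | h0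
        · left
          have := pow_eq_zero_iff (n := 2) (by norm_num) |>.mp h0
          linear_combination this
        · right; linear_combination h0
      · rintro (rfl | rfl) <;> ring
    rw [hset]
    exact Set.ncard_pair hne



variable [Fintype F]


lemma mem_range_of_pow_card_eq {K : Type*} [Field K] [Algebra F K] {x : K}
    (hx : x ^ (Fintype.card F) = x) : ∃ a : F, algebraMap F K a = x := by
  classical
  set q := Fintype.card F with hq
  have hq1 : 1 < q := Fintype.one_lt_card
  set P : Polynomial K := Polynomial.X ^ q - Polynomial.X with hP
  have hdeg : P.natDegree = q := by
    rw [hP]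
    rw [Polynomial.natDegree_sub_eq_left_of_natDegree_lt] <;>
      simp [Polynomial.natDegree_X_pow, Polynomial.natDegree_X, hq1]
  have hP0 : P ≠ 0 := by
    intro h
    rw [h, Polynomial.natDegree_zero] at hdeg
    omega
  have hroot : ∀ z : K, z ^ q = z → z ∈ P.roots.toFinset := by
    intro z hz
    rw [Multiset.mem_toFinset, Polynomial.mem_roots hP0]
    simp [hP, Polynomial.IsRoot, hz]
  set T : Finset K := Finset.univ.image (algebraMap F K) with hT
  have hTcard : T.card = q := by
    rw [hT, Finset.card_image_of_injective _ (algebraMap F K).injective, Finset.card_univ]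
  have hTR : T ⊆ P.roots.toFinset := by
    intro z hz
    rw [hT, Finset.mem_image] at hz
    obtain ⟨a, _, rfl⟩ := hz
    apply hroot
    rw [← map_pow, hq, FiniteField.pow_card]
  have hRcard : P.roots.toFinset.card ≤ q :=
    le_trans (Multiset.toFinset_card_le _) (le_trans (Polynomial.card_roots' P) (le_of_eq hdeg))
  have hTeq : T = P.roots.toFinset :=
    Finset.eq_of_subset_of_card_le hTR (by rw [hTcard]; exact hRcard)
  have hxT : x ∈ T := by
    rw [hTeq]
    exact hroot x hx
  rw [hT, Finset.mem_image] at hxT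
  obtain ⟨a, _, ha⟩ := hxT
  exact ⟨a, ha⟩

lemma cardano {q p n : ℕ} (hq : Fintype.card F = q) (hp : p.Prime) [CharP F p]
    (hqpn : q = p ^ n) (hq3 : q % 3 = 1) {β ω : F} (hβ : β ≠ 0)
    (h2 : (2 : F) ≠ 0) (h3 : (3 : F) ≠ 0) (hω3 : ω ^ 3 = 1) (hω1 : ω ≠ 1)
    (hNS : ¬ IsSquare (1 + 4 * β ^ 3)) :
    ∃ t : F, t ^ 3 - 3 * β * t ^ 2 - 1 = 0 := by
  classical
  set D : F := 1 + 4 * β ^ 3 with hD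
  have hsqD : ∀ b : F, b ^ 2 ≠ D := fun b hb => hNS ⟨b, by rw [← hb]; ring⟩
  have hirr : Irreducible (Polynomial.X ^ 2 - Polynomial.C D) :=
    X_pow_sub_C_irreducible_of_prime Nat.prime_two hsqD
  haveI : Fact (Irreducible (Polynomial.X ^ 2 - Polynomial.C D)) := ⟨hirr⟩
  set K := AdjoinRoot (Polynomial.X ^ 2 - Polynomial.C D) with hK
  set i : F →+* K := algebraMap F K with hi
  have hinj : Function.Injective i := i.injective
  haveI : CharP K p := charP_of_injective_algebraMap (algebraMap F K).injective p
  set δ : K := AdjoinRoot.root (Polynomial.X ^ 2 - Polynomial.C D) with hδ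
  haveI : Fact (Nat.Prime p) := ⟨hp⟩
  have hδ2 : δ ^ 2 = i D := by
    have h := AdjoinRoot.eval₂_root (Polynomial.X ^ 2 - Polynomial.C D)
    simp only [Polynomial.eval₂_sub, Polynomial.eval₂_pow, Polynomial.eval₂_X,
      Polynomial.eval₂_C] at h
    rw [hi, AdjoinRoot.algebraMap_eq]
    linear_combination h
  have hFq : ∀ a : F, a ^ q = a := fun a => by rw [← hq]; exact FiniteField.pow_card a
  have hiq : ∀ a : F, (i a) ^ q = i a := fun a => by rw [← map_pow, hFq]
  have hfrobsub : ∀ x y : K, (x - y) ^ q = x ^ q - y ^ q := fun x y => by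
    rw [hqpn]; exact sub_pow_char_pow ..
  have hfrobadd : ∀ x y : K, (x + y) ^ q = x ^ q + y ^ q := fun x y => by
    rw [hqpn]; exact add_pow_char_pow ..
  have hD0 : D ≠ 0 := fun h => hNS (h ▸ ⟨0, by ring⟩)
  -- δ^q = -δ
  have hδq : δ ^ q = -δ := by
    have h1 : (δ ^ q) ^ 2 = δ ^ 2 := by
      rw [← pow_mul, mul_comm, pow_mul, hδ2, hiq]
    have h2' : (δ ^ q - δ) * (δ ^ q + δ) = 0 := by linear_combination h1
    rcases mul_eq_zero.mp h2' with h | h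
    · exfalso
      have hδfix : δ ^ q = δ := by linear_combination h
      obtain ⟨a, ha⟩ := mem_range_of_pow_card_eq (F := F) (by rw [hq]; exact hδfix)
      exact hsqD a (hinj (by rw [map_pow, ha, hδ2]))
    · linear_combination h
  have hi2 : i (2 : F) = 2 := map_ofNat i 2
  have h2K : (2 : K) ≠ 0 := by
    intro h
    apply h2
    apply hinj
    rw [hi2, map_zero]
    exact h
  set w : K := (1 + δ) / 2 with hw
  set wb : K := (1 - δ) / 2 with hwb
  have hwsum : w + wb = 1 := by
    rw [hw, hwb, ← add_div, show (1 : K) + δ + (1 - δ) = 2 from by ring]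
    exact div_self h2K
  have hiD : i D = 1 + 4 * (i β) ^ 3 := by
    have h' : i D = i (1 + 4 * β ^ 3) := congrArg (fun x => i x) hD
    rw [h', map_add, map_mul, map_pow, map_one, map_ofNat]
  have hwprod : w * wb = -(i β) ^ 3 := by
    rw [hw, hwb]
    rw [div_mul_div_comm, div_eq_iff (mul_ne_zero h2K h2K)]
    linear_combination -hδ2 - hiD
  have hβK : i β ≠ 0 := fun h => hβ (hinj (by rw [h, map_zero]))
  have hw0 : w ≠ 0 := by
    intro h
    rw [h, zero_mul] at hwprod
    exact hβK (pow_eq_zero_iff (n := 3) (by norm_num) |>.mp (by linear_combination hwprod))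
  have hwb0 : wb ≠ 0 := by
    intro h
    rw [h, mul_zero] at hwprod
    exact hβK (pow_eq_zero_iff (n := 3) (by norm_num) |>.mp (by linear_combination hwprod))
  have h2qK : (2 : K) ^ q = 2 := by
    rw [← hi2, hiq, hi2]
  have hwq : w ^ q = wb := by
    rw [hw, hwb, div_pow, hfrobadd, one_pow, hδq, h2qK]
    ring
  -- Bezout: 3 a + (q+1) b = 1
  have hndvd : ¬ (3 : ℕ) ∣ (q + 1) := by omega
  have hcop : Nat.Coprime 3 (q + 1) := (Nat.Prime.coprime_iff_not_dvd (by norm_num)).mpr hndvd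
  obtain ⟨a, b, hbez⟩ : ∃ a b : ℤ, 3 * a + (q + 1 : ℕ) * b = 1 := by
    refine ⟨Int.gcdA 3 (q + 1), Int.gcdB 3 (q + 1), ?_⟩
    have h := Int.gcd_eq_gcd_ab 3 (q + 1 : ℕ)
    have hg : Int.gcd 3 (q + 1 : ℕ) = 1 := by
      have : Int.gcd ((3 : ℕ) : ℤ) ((q + 1 : ℕ) : ℤ) = Nat.gcd 3 (q + 1) := Int.gcd_natCast_natCast _ _
      simp only [Nat.cast_ofNat] at this
      rw [this]
      exact hcop
    rw [hg] at h
    push_cast at h ⊢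
    linarith
  set mβ : K := i (-β) with hmβ
  have hmβ0 : mβ ≠ 0 := fun h => hβ (neg_eq_zero.mp (hinj (by rw [hmβ] at h; rw [h, map_zero])))
  have hwq1 : w ^ (q + 1) = mβ ^ 3 := by
    rw [pow_succ, hwq, hmβ, map_neg]
    rw [mul_comm]
    calc w * wb = -(i β) ^ 3 := hwprod
    _ = (-(i β)) ^ 3 := by ring
  set v : K := w ^ a * mβ ^ b with hv
  have hv0 : v ≠ 0 := mul_ne_zero (zpow_ne_zero _ hw0) (zpow_ne_zero _ hmβ0)
  have hmb3 : mβ ^ ((3 : ℕ) : ℤ) = w ^ ((q + 1 : ℕ) : ℤ) := by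
    rw [zpow_natCast, zpow_natCast]
    exact hwq1.symm
  have hv3 : v ^ 3 = w := by
    calc v ^ 3 = v ^ ((3 : ℕ) : ℤ) := (zpow_natCast v 3).symm
    _ = (w ^ a) ^ ((3 : ℕ) : ℤ) * (mβ ^ b) ^ ((3 : ℕ) : ℤ) := by rw [hv, mul_zpow]
    _ = w ^ (a * ((3 : ℕ) : ℤ)) * mβ ^ (b * ((3 : ℕ) : ℤ)) := by
        rw [← zpow_mul, ← zpow_mul]
    _ = w ^ (a * ((3 : ℕ) : ℤ)) * (mβ ^ ((3 : ℕ) : ℤ)) ^ b := by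
        rw [← zpow_mul, mul_comm b]
    _ = w ^ (a * ((3 : ℕ) : ℤ)) * w ^ (((q + 1 : ℕ) : ℤ) * b) := by
        rw [hmb3, ← zpow_mul]
    _ = w ^ (a * ((3 : ℕ) : ℤ) + ((q + 1 : ℕ) : ℤ) * b) := (zpow_add₀ hw0 _ _).symm
    _ = w ^ (1 : ℤ) := by
        congr 1
        push_cast
        push_cast at hbez
        linarith
    _ = w := zpow_one w
  have hvq3 : (v ^ q) ^ 3 = wb := by
    rw [← pow_mul, mul_comm, pow_mul, hv3, hwq]
  set y : K := mβ * v⁻¹ with hy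
  have hy0 : y ≠ 0 := mul_ne_zero hmβ0 (inv_ne_zero hv0)
  have hyv : y * v = mβ := by
    rw [hy, mul_assoc, inv_mul_cancel₀ hv0, mul_one]
  have hmβi : mβ = -(i β) := by rw [hmβ, map_neg]
  have hy3 : y ^ 3 = wb := by
    rw [hy, mul_pow, inv_pow, hv3, hmβi]
    rw [← div_eq_mul_inv, div_eq_iff hw0]
    linear_combination -hwprod
  set ζ : K := v ^ q * y⁻¹ with hζ
  have hζdef : v ^ q = ζ * y := by
    rw [hζ, mul_assoc, inv_mul_cancel₀ hy0, mul_one]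
  have hζ3 : ζ ^ 3 = 1 := by
    rw [hζ, mul_pow, hvq3, inv_pow, hy3, mul_inv_cancel₀ hwb0]
  have hωK3 : (i ω) ^ 3 = 1 := by rw [← map_pow, hω3, map_one]
  have hωK1 : (i ω) ≠ 1 := fun h => hω1 (hinj (by rw [h, map_one]))
  have hωq : (i ω) ^ q = i ω := hiq ω
  obtain ⟨V, hV0, hV3, hVq⟩ : ∃ V : K, V ≠ 0 ∧ V ^ 3 = w ∧ V ^ q * V = mβ := by
    have hω0 : (i ω) ≠ 0 := by
      intro h
      rw [h] at hωK3
      norm_num at hωK3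
    rcases cube_roots_of_unity hωK3 hωK1 hζ3 with hc | hc | hc
    · refine ⟨v, hv0, hv3, ?_⟩
      rw [hζdef, hc, one_mul, hyv]
    · refine ⟨i ω * v, mul_ne_zero hω0 hv0, ?_, ?_⟩
      · calc (i ω * v) ^ 3 = (i ω) ^ 3 * v ^ 3 := by ring
        _ = w := by rw [hωK3, one_mul, hv3]
      · rw [mul_pow, hωq, hζdef, hc]
        calc i ω * (i ω * y) * (i ω * v) = (i ω) ^ 3 * (y * v) := by ring
        _ = mβ := by rw [hωK3, hyv, one_mul]
    · refine ⟨(i ω) ^ 2 * v, mul_ne_zero (pow_ne_zero _ hω0) hv0, ?_, ?_⟩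
      · calc ((i ω) ^ 2 * v) ^ 3 = ((i ω) ^ 3) ^ 2 * v ^ 3 := by ring
        _ = w := by rw [hωK3, one_pow, one_mul, hv3]
      · have h1 : ((i ω) ^ 2) ^ q = (i ω) ^ 2 := by
          rw [← pow_mul, mul_comm, pow_mul, hωq]
        rw [mul_pow, h1, hζdef, hc]
        calc (i ω) ^ 2 * ((i ω) ^ 2 * y) * ((i ω) ^ 2 * v) = ((i ω) ^ 3) ^ 2 * (y * v) := by ring
        _ = mβ := by rw [hωK3, one_pow, one_mul, hyv]
  -- now descend
  have hVq' : V ^ q = mβ * V⁻¹ := by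
    rw [← hVq, mul_assoc, mul_inv_cancel₀ hV0, mul_one]
  set u : K := V - i β * V⁻¹ with hu
  have huq : u ^ q = u := by
    rw [hu, hfrobsub, mul_pow, inv_pow, hiq, hVq', hmβi]
    have hkey : i β * (-(i β) * V⁻¹)⁻¹ = -V := by
      rw [mul_inv, inv_neg, inv_inv, neg_mul, mul_neg, ← mul_assoc,
        mul_inv_cancel₀ hβK, one_mul]
    rw [hkey]
    ring
  have hX : w ^ 2 - (i β) ^ 3 - w = 0 := by
    linear_combination w * hwsum - hwprod
  have hu3 : u ^ 3 + 3 * i β * u = 1 := by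
    rw [hu]
    have hVW : V * V⁻¹ = 1 := mul_inv_cancel₀ hV0
    linear_combination (1 + (w - 1) * V⁻¹ ^ 3) * hV3 + V⁻¹ ^ 3 * hX + (-3 * i β * V + 3 * i β ^ 2 * V⁻¹ - (w - 1) * ((V * V⁻¹) ^ 2 + V * V⁻¹ + 1)) * hVW
  obtain ⟨u0, hu0⟩ := mem_range_of_pow_card_eq (F := F) (x := u) (by rw [hq]; exact huq)
  have hu0eq : u0 ^ 3 + 3 * β * u0 = 1 := by
    apply hinj
    rw [map_add, map_pow, map_mul, map_mul, map_ofNat, map_one]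
    rw [show i u0 = u from hu0]
    exact hu3
  have hu00 : u0 ≠ 0 := by
    intro h
    rw [h] at hu0eq
    simp at hu0eq
  refine ⟨u0⁻¹, ?_⟩
  have h1 : u0 ^ 3 ≠ 0 := pow_ne_zero _ hu00
  field_simp
  linear_combination -hu0eq



end AuxStmt2
/-- Let `q ≥ 5` be an odd prime power with `q ≡ 1 (mod 3)` such that `2` is
a cube in `F_q`. Then there are exactly three `β ∈ F_q` for which `t³ - 3βt² - 1` has exactly
two roots in `F_q`, and the number of `β` for which it has exactly one root equals the number
of `β ∈ F_q` with `η(1 + 4β³) = -1`. -/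
theorem stmt2 (q : ℕ) (hq5 : 5 ≤ q) (hodd : Odd q) (hq3 : q % 3 = 1)
    (F : Type*) [Field F] [Fintype F] (hcard : Fintype.card F = q)
    (h2 : ∃ x : F, x ^ 3 = 2) :
    ({β : F | ({t : F | t ^ 3 - 3 * β * t ^ 2 - 1 = 0} : Set F).ncard = 2} : Set F).ncard = 3 ∧
    ({β : F | ({t : F | t ^ 3 - 3 * β * t ^ 2 - 1 = 0} : Set F).ncard = 1} : Set F).ncard
      = ({β : F | quadChar F (1 + 4 * β ^ 3) = -1} : Set F).ncard := by
  classical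
  haveI : CharP F (ringChar F) := ringChar.charP F
  obtain ⟨n, hp, hqpn⟩ := FiniteField.card F (ringChar F)
  rw [hcard] at hqpn
  have h2F : (2 : F) ≠ 0 := by
    intro h
    have h2' : ((2 : ℕ) : F) = 0 := by exact_mod_cast h
    have hdvd : ringChar F ∣ 2 := (CharP.cast_eq_zero_iff F (ringChar F) 2).mp h2'
    have hc2 : ringChar F = 2 := (Nat.prime_dvd_prime_iff_eq hp Nat.prime_two).mp hdvd
    have heven := FiniteField.even_card_iff_char_two.mp hc2
    rw [hcard] at heven
    rcases hodd with ⟨k, hk⟩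
    omega
  have h3F : (3 : F) ≠ 0 := by
    intro h
    have h3' : ((3 : ℕ) : F) = 0 := by exact_mod_cast h
    have hdvd : ringChar F ∣ 3 := (CharP.cast_eq_zero_iff F (ringChar F) 3).mp h3'
    have hc3 : ringChar F = 3 := (Nat.prime_dvd_prime_iff_eq hp (by norm_num)).mp hdvd
    rw [hc3] at hqpn
    have hdq : 3 ∣ q := hqpn ▸ dvd_pow_self 3 n.pos.ne'
    rcases hdq with ⟨k, hk⟩
    omega
  -- a primitive cube root of unity
  haveI : Fact (Nat.Prime 3) := ⟨by norm_num⟩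
  have hdvd3 : 3 ∣ Fintype.card Fˣ := by
    rw [Fintype.card_units, hcard]
    omega
  obtain ⟨ζu, hζu⟩ := exists_prime_orderOf_dvd_card 3 hdvd3
  set ω : F := (ζu : F) with hωdef
  have hω3 : ω ^ 3 = 1 := by
    have h := pow_orderOf_eq_one ζu
    rw [hζu] at h
    have := congrArg (Units.val) h
    push_cast at this
    exact_mod_cast this
  have hω1 : ω ≠ 1 := by
    intro h
    have hu1 : ζu = 1 := Units.ext h
    rw [hu1, orderOf_one] at hζu
    norm_num at hζu
  have hω0 : ω ≠ 0 := by
    intro h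
    rw [h] at hω3
    norm_num at hω3
  have hsum : ω ^ 2 + ω + 1 = 0 := omega_sq_sum hω3 hω1
  set s : F := 2 * ω + 1 with hsdef
  have hs : s ^ 2 = -3 := by rw [hsdef]; linear_combination 4 * hsum
  constructor
  · -- first part
    have hseteq : ({β : F | ({t : F | t ^ 3 - 3 * β * t ^ 2 - 1 = 0} : Set F).ncard = 2} : Set F)
        = {β : F | 1 + 4 * β ^ 3 = 0} := by
      ext β
      exact ncard_two_iff h3F
    rw [hseteq]
    obtain ⟨x, hx⟩ := h2
    have hx0 : x ≠ 0 := by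
      intro h
      apply h2F
      rw [← hx, h]
      norm_num
    set β₀ : F := -(x ^ 2)⁻¹ with hβ₀def
    have hβ₀ : 4 * β₀ ^ 3 = -1 := by
      rw [hβ₀def]
      have hx2 : x ^ 2 ≠ 0 := pow_ne_zero _ hx0
      field_simp
      linear_combination (x ^ 3 + 2) * hx
    have hβ₀0 : β₀ ≠ 0 := by
      intro h
      rw [h] at hβ₀
      norm_num at hβ₀
    have h4F : (4 : F) ≠ 0 := by
      intro h
      apply h2F
      have h22 : (2 : F) * 2 = 4 := by norm_num
      rcases mul_eq_zero.mp (h22.trans h) with h' | h' <;> exact h'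
    have hset2 : ({β : F | 1 + 4 * β ^ 3 = 0} : Set F) = {β₀, ω * β₀, ω ^ 2 * β₀} := by
      ext z
      simp only [Set.mem_setOf_eq, Set.mem_insert_iff, Set.mem_singleton_iff]
      constructor
      · intro hz
        have hz3 : z ^ 3 = β₀ ^ 3 := by
          apply mul_left_cancel₀ h4F
          linear_combination hz - hβ₀ - 1
        have hy3 : (z / β₀) ^ 3 = 1 := by
          rw [div_pow, hz3]
          field_simp
        rcases cube_roots_of_unity hω3 hω1 hy3 with h | h | h
        · left
          rw [(div_eq_iff hβ₀0).mp h, one_mul]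
        · right; left
          exact (div_eq_iff hβ₀0).mp h
        · right; right
          exact (div_eq_iff hβ₀0).mp h
      · rintro (rfl | rfl | rfl)
        · linear_combination hβ₀
        · linear_combination hβ₀ + 4 * β₀ ^ 3 * hω3
        · linear_combination hβ₀ + 4 * β₀ ^ 3 * (ω ^ 3 + 1) * hω3
    rw [hset2]
    apply Set.ncard_eq_three.mpr
    refine ⟨β₀, ω * β₀, ω ^ 2 * β₀, ?_, ?_, ?_, rfl⟩
    · intro h
      exact hω1 (mul_right_cancel₀ hβ₀0 (by linear_combination h)).symm
    · intro h
      have hω2 : ω ^ 2 = 1 := (mul_right_cancel₀ hβ₀0 (by linear_combination h)).symm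
      exact hω1 (by linear_combination hω3 - ω * hω2)
    · intro h
      have hωω : ω = ω ^ 2 := mul_right_cancel₀ hβ₀0 h
      exact hω1 (mul_left_cancel₀ hω0 (by linear_combination hωω)).symm
  · -- second part
    have hseteq : ({β : F | ({t : F | t ^ 3 - 3 * β * t ^ 2 - 1 = 0} : Set F).ncard = 1} : Set F)
        = {β : F | quadChar F (1 + 4 * β ^ 3) = -1} := by
      ext β
      simp only [Set.mem_setOf_eq]
      constructor
      · intro h1
        exact quadChar_of_unique_root h2F h3F hs h1
      · intro hqc
        have hNS : ¬ IsSquare (1 + 4 * β ^ 3) := (quadChar_eq_neg_one_iff _).mp hqc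
        have hβ0 : β ≠ 0 := by
          intro h
          rw [h] at hNS
          exact hNS ⟨1, by norm_num⟩
        obtain ⟨t0, ht0⟩ := cardano hcard hp hqpn hq3 hβ0 h2F h3F hω3 hω1 hNS
        rw [Set.ncard_eq_one]
        refine ⟨t0, ?_⟩
        ext t
        simp only [Set.mem_setOf_eq, Set.mem_singleton_iff]
        constructor
        · intro ht
          by_contra hne
          exact hNS (isSquare_of_two_roots h3F hs ht ht0 hne)
        · rintro rfl
          exact ht0
    rw [hseteq]
end

section
/- Let q = 2^(2m+1) with m ≥ 1. Then there is no β ∈ F_q for which the cubic polynomial t³ + βt² + 1 has exactly two roots in F_q, and there are exactly q/2 elements β ∈ F_q for which it has exactly one root in F_q. -/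
open Finset

section Aux

variable {F : Type*} [Field F]

private lemma root_ne_zero' {β t : F} (h : t ^ 3 + β * t ^ 2 + 1 = 0) : t ≠ 0 := by
  rintro rfl; simp at h

private lemma pair_rel' (h2 : (2 : F) = 0) {a b β : F} (hne : a ≠ b)
    (ha : a ^ 3 + β * a ^ 2 + 1 = 0) (hb : b ^ 3 + β * b ^ 2 + 1 = 0) :
    a ^ 2 * b ^ 2 = a + b := by
  have hab : a + b ≠ 0 := fun h => hne (by linear_combination h - b * h2)
  have key : (a + b) * (a ^ 2 * b ^ 2 + (a + b)) = 0 := by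
    linear_combination b ^ 2 * ha + a ^ 2 * hb + (a * b - β * a ^ 2 * b ^ 2) * h2
  rcases mul_eq_zero.1 key with h | h
  · exact absurd h hab
  · linear_combination h - (a + b) * h2

private lemma third_root' (h2 : (2 : F) = 0) {a b β : F} (hne : a ≠ b)
    (ha : a ^ 3 + β * a ^ 2 + 1 = 0) (hb : b ^ 3 + β * b ^ 2 + 1 = 0) :
    ∃ c, (c ^ 3 + β * c ^ 2 + 1 = 0) ∧ c ≠ a ∧ c ≠ b := by
  have ha0 : a ≠ 0 := root_ne_zero' ha
  have hr : a ^ 2 * b ^ 2 = a + b := pair_rel' h2 hne ha hb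
  set c := b + (a⁻¹) ^ 2 with hcdef
  have hinv : (a⁻¹) ^ 2 * a ^ 2 = 1 := by
    rw [← mul_pow, inv_mul_cancel₀ ha0, one_pow]
  have hc : a ^ 2 * c = a ^ 2 * b + 1 := by rw [hcdef]; linear_combination hinv
  refine ⟨c, ?_, ?_, ?_⟩
  · have h6 : a ^ 6 * (c ^ 3 + β * c ^ 2 + 1) = 0 := by
      linear_combination (1 + a^2*β + a^2*c + 2*a^2*b + a^4*c*β + a^4*c^2 + a^4*b*β
        + a^4*b*c + a^4*b^2) * hc + a^6 * hb + ha + a^2 * hr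
        + (2*a^2*b + a^4*b*β + a^4*b^2) * h2
    rcases mul_eq_zero.1 h6 with h | h
    · exact absurd (pow_eq_zero_iff (by norm_num) |>.1 h) ha0
    · exact h
  · intro hEq
    rw [hEq] at hc
    have hca : a ^ 3 = a ^ 2 * b + 1 := by linear_combination hc
    have hone : (1 : F) = 0 := by
      linear_combination (1 + a^2*b^4) * hca + (a^2 + a^2*b^3 + a^3*b^2) * hr
        + (1 + a^2*b + a^2*b^4 + a^3*b^3 - a^5*b^4) * h2
    exact one_ne_zero hone
  · intro hEq
    rw [hcdef] at hEq
    have h0 : (a⁻¹) ^ 2 = 0 := by linear_combination hEq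
    exact ha0 (inv_eq_zero.1 (pow_eq_zero_iff (by norm_num) |>.1 h0))

private lemma three_rel' (h2 : (2 : F) = 0) {a b c β : F} (hab : a ≠ b) (hac : a ≠ c)
    (hbc : b ≠ c)
    (ha : a ^ 3 + β * a ^ 2 + 1 = 0) (hb : b ^ 3 + β * b ^ 2 + 1 = 0)
    (hc : c ^ 3 + β * c ^ 2 + 1 = 0) :
    a ^ 2 * (b + c) = 1 := by
  have rab := pair_rel' h2 hab ha hb
  have rac := pair_rel' h2 hac ha hc
  have hbc0 : b + c ≠ 0 := fun h => hbc (by linear_combination h - c * h2)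
  have key : (b + c) * (a ^ 2 * (b + c) - 1) = 0 := by
    linear_combination rab - rac + (a^2*b*c + a^2*c^2 - c) * h2
  rcases mul_eq_zero.1 key with h | h
  · exact absurd h hbc0
  · linear_combination h

private lemma no_four' (h2 : (2 : F) = 0) {a b c d β : F}
    (hab : a ≠ b) (hac : a ≠ c) (hbc : b ≠ c) (had : a ≠ d) (hbd : b ≠ d) (hcd : c ≠ d)
    (ha : a ^ 3 + β * a ^ 2 + 1 = 0) (hb : b ^ 3 + β * b ^ 2 + 1 = 0)
    (hc : c ^ 3 + β * c ^ 2 + 1 = 0) (hd : d ^ 3 + β * d ^ 2 + 1 = 0) : False := by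
  have h1 := three_rel' h2 hab hac hbc ha hb hc
  have h1' := three_rel' h2 hab had hbd ha hb hd
  have ha0 : a ≠ 0 := root_ne_zero' ha
  have key : a ^ 2 * (c - d) = 0 := by linear_combination h1 - h1'
  rcases mul_eq_zero.1 key with h | h
  · exact ha0 (pow_eq_zero_iff (by norm_num) |>.1 h)
  · exact hcd (sub_eq_zero.1 h)

private lemma card_three' (h2 : (2 : F) = 0) [Fintype F] {a b β : F}
    [DecidablePred fun t : F => t ^ 3 + β * t ^ 2 + 1 = 0]
    (hne : a ≠ b) (ha : a ^ 3 + β * a ^ 2 + 1 = 0) (hb : b ^ 3 + β * b ^ 2 + 1 = 0) :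
    (univ.filter fun t : F => t ^ 3 + β * t ^ 2 + 1 = 0).card = 3 := by
  classical
  obtain ⟨c, hcroot, hca, hcb⟩ := third_root' h2 hne ha hb
  have hs : (univ.filter fun t : F => t ^ 3 + β * t ^ 2 + 1 = 0) = {a, b, c} := by
    ext d
    simp only [mem_filter, mem_univ, true_and, mem_insert, mem_singleton]
    constructor
    · intro hd
      by_contra hcon
      push_neg at hcon
      obtain ⟨hda, hdb, hdc⟩ := hcon
      exact no_four' h2 hne (Ne.symm hca) (Ne.symm hcb) (Ne.symm hda) (Ne.symm hdb)
        (Ne.symm hdc) ha hb hcroot hd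
    · rintro (rfl | rfl | rfl) <;> assumption
  rw [hs, card_insert_of_notMem (by simp [hne, Ne.symm hca]),
    card_insert_of_notMem (by simp [Ne.symm hcb]), card_singleton]

end Aux

/-- Let `q = 2^(2m+1)` with `m ≥ 1`. Then there is no `β ∈ F_q` for which
`t³ + βt² + 1` has exactly two roots in `F_q`, and there are exactly `q/2` elements
`β ∈ F_q` for which it has exactly one root in `F_q`. -/
theorem stmt3 (m : ℕ) (hm : 1 ≤ m) (F : Type*) [Field F] [Fintype F]
    (hcard : Fintype.card F = 2 ^ (2 * m + 1)) :
    ({β : F | ({t : F | t ^ 3 + β * t ^ 2 + 1 = 0} : Set F).ncard = 2} : Set F).ncard = 0 ∧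
    ({β : F | ({t : F | t ^ 3 + β * t ^ 2 + 1 = 0} : Set F).ncard = 1} : Set F).ncard
      = 2 ^ (2 * m + 1) / 2 := by
  classical
  -- the characteristic is 2
  obtain ⟨p, hp⟩ := CharP.exists F
  haveI := hp
  have hpprime : p.Prime := CharP.char_is_prime F p
  haveI : Fact p.Prime := ⟨hpprime⟩
  obtain ⟨n, hn⟩ := FiniteField.card F p
  have hp2 : p = 2 := by
    have hdvd : p ∣ 2 ^ (2 * m + 1) := by
      rw [← hcard, hn.2]
      exact dvd_pow_self p (by positivity)
    exact (Nat.prime_dvd_prime_iff_eq hpprime Nat.prime_two).1 (hpprime.dvd_of_dvd_pow hdvd)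
  subst hp2
  have h2 : (2 : F) = 0 := by exact_mod_cast CharP.cast_eq_zero F 2
  -- root sets as finsets
  set R : F → Finset F := fun β => univ.filter (fun t => t ^ 3 + β * t ^ 2 + 1 = 0) with hR
  have hncard : ∀ β : F, ({t : F | t ^ 3 + β * t ^ 2 + 1 = 0} : Set F).ncard = (R β).card := by
    intro β
    rw [← Set.ncard_coe_finset]
    congr 1
    ext t
    simp [hR]
  have h013 : ∀ β : F, (R β).card = 0 ∨ (R β).card = 1 ∨ (R β).card = 3 := by
    intro β
    rcases Nat.lt_or_ge (R β).card 2 with h | h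
    · omega
    · right; right
      obtain ⟨a, haR, b, hbR, hne⟩ := (Finset.one_lt_card (s := R β)).1 (by omega)
      simp only [hR, mem_filter, mem_univ, true_and] at haR hbR
      have := card_three' h2 hne haR hbR
      simpa [hR] using this
  -- the β-map on nonzero t
  set g : F → F := fun t => (t ^ 3 + 1) / t ^ 2 with hg
  have hgt : ∀ t : F, t ≠ 0 → g t * t ^ 2 = t ^ 3 + 1 := by
    intro t ht
    simp only [hg]
    field_simp
  have hg_root : ∀ t : F, t ≠ 0 → t ∈ R (g t) := by
    intro t ht
    simp only [hR, mem_filter, mem_univ, true_and]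
    have h := hgt t ht
    linear_combination h + (t ^ 3 + 1) * h2
  have hg_eq : ∀ t β : F, t ∈ R β → g t = β := by
    intro t β htR
    simp only [hR, mem_filter, mem_univ, true_and] at htR
    have ht : t ≠ 0 := root_ne_zero' htR
    simp only [hg]
    rw [div_eq_iff (pow_ne_zero 2 ht)]
    linear_combination htR - (β * t ^ 2) * h2
  have hfib : ∀ β : F, (univ.filter fun t : F => t ≠ 0).filter (fun t => g t = β) = R β := by
    intro β
    ext t
    simp only [Finset.filter_filter, mem_filter, mem_univ, true_and]
    constructor
    · rintro ⟨ht, rfl⟩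
      exact hg_root t ht
    · intro h
      have ht : t ≠ 0 := by
        have h' : t ^ 3 + β * t ^ 2 + 1 = 0 := by
          simpa [hR, mem_filter] using h
        exact root_ne_zero' h'
      exact ⟨ht, hg_eq t β h⟩
  have hsum : (univ.filter fun t : F => t ≠ 0).card = ∑ β : F, (R β).card := by
    rw [Finset.card_eq_sum_card_fiberwise (f := g) (t := univ) (fun x _ => mem_univ _)]
    exact Finset.sum_congr rfl fun β _ => by rw [← hfib β, Finset.filter_filter]
  have hT : (univ.filter fun t : F => t ≠ 0).card = 2 ^ (2 * m + 1) - 1 := by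
    rw [Finset.filter_ne', Finset.card_erase_of_mem (mem_univ 0), Finset.card_univ, hcard]
  set n1 := (univ.filter fun β : F => (R β).card = 1).card with hn1
  set n3 := (univ.filter fun β : F => (R β).card = 3).card with hn3
  have hsplit : ∑ β : F, (R β).card = n1 + 3 * n3 := by
    have hpt : ∀ β : F, (R β).card
        = (if (R β).card = 1 then 1 else 0) + 3 * (if (R β).card = 3 then 1 else 0) := by
      intro β
      rcases h013 β with h | h | h <;> rw [h] <;> norm_num
    rw [Finset.sum_congr rfl fun β _ => hpt β, Finset.sum_add_distrib, ← Finset.mul_sum,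
      hn1, hn3, Finset.card_filter, Finset.card_filter]
  -- elements lying in fibers of size 3
  set T3 := univ.filter (fun t : F => t ≠ 0 ∧ (R (g t)).card = 3) with hT3
  have hT3card : T3.card = 3 * n3 := by
    rw [hT3, Finset.card_eq_sum_card_fiberwise (f := g)
      (t := univ.filter fun β : F => (R β).card = 3)
      (fun t ht => by
        simp only [Finset.mem_coe, mem_filter, mem_univ, true_and] at ht ⊢
        exact ht.2)]
    have hfib3 : ∀ β ∈ (univ.filter fun β : F => (R β).card = 3),
        ((univ.filter (fun t : F => t ≠ 0 ∧ (R (g t)).card = 3)).filter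
          fun t => g t = β) = R β := by
      intro β hβ
      simp only [mem_filter, mem_univ, true_and] at hβ
      ext t
      simp only [Finset.filter_filter, mem_filter, mem_univ, true_and]
      constructor
      · rintro ⟨⟨ht0, _⟩, rfl⟩
        exact hg_root t ht0
      · intro h
        have ht0 : t ≠ 0 := by
          have h' : t ^ 3 + β * t ^ 2 + 1 = 0 := by
            simpa [hR, mem_filter] using h
          exact root_ne_zero' h'
        have hgt' := hg_eq t β h
        exact ⟨⟨ht0, by rw [hgt']; exact hβ⟩, hgt'⟩
    have hsum3 : ∑ β ∈ (univ.filter fun β : F => (R β).card = 3),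
        ((univ.filter (fun t : F => t ≠ 0 ∧ (R (g t)).card = 3)).filter
          (fun t => g t = β)).card
        = ∑ _β ∈ (univ.filter fun β : F => (R β).card = 3), 3 :=
      Finset.sum_congr rfl fun β hβ => by rw [hfib3 β hβ]; exact (mem_filter.1 hβ).2
    rw [hsum3, Finset.sum_const, smul_eq_mul, mul_comm, hn3]
  -- size-3 fibers correspond to Artin–Schreier solvability
  have hiff : ∀ t : F, t ≠ 0 → ((R (g t)).card = 3 ↔ ∃ x : F, x ^ 2 + x + t ^ 3 = 0) := by
    intro t ht
    constructor
    · intro h3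
      have htR := hg_root t ht
      obtain ⟨s, hsR, hst⟩ := Finset.exists_mem_ne (s := R (g t)) (by omega) t
      have hs : s ^ 3 + g t * s ^ 2 + 1 = 0 := by
        simpa [hR, mem_filter] using hsR
      have ht' : t ^ 3 + g t * t ^ 2 + 1 = 0 := by
        simpa [hR, mem_filter] using htR
      have hr := pair_rel' h2 (Ne.symm hst) ht' hs
      exact ⟨s * t ^ 2, by linear_combination t ^ 2 * hr + (s * t ^ 2 + t ^ 3) * h2⟩
    · rintro ⟨x, hx⟩
      have hj : t * t⁻¹ = 1 := mul_inv_cancel₀ ht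
      have hG := hgt t ht
      have hsroot : (x * (t⁻¹) ^ 2) ^ 3 + g t * (x * (t⁻¹) ^ 2) ^ 2 + 1 = 0 := by
        linear_combination ((t⁻¹)^4 * (g t) + (t⁻¹)^6 + x*(t⁻¹)^6) * hx
          + (1 + (t⁻¹)*t + (t⁻¹)^2*t^2 + (t⁻¹)^3 + (t⁻¹)^3*(g t)*t^2 + (t⁻¹)^4*t
            + (t⁻¹)^5*t^2 + x*(t⁻¹)^4*(g t) + x*(t⁻¹)^5*(g t)*t) * hj
          + ((t⁻¹)^3 + x*(t⁻¹)^6) * hG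
          + (1 + (t⁻¹)^3 - (t⁻¹)^4*(g t)*t^3 - (t⁻¹)^6*t^3 - x*(t⁻¹)^6*(g t)*t^2
            - x^2*(t⁻¹)^6) * h2
      have hst : x * (t⁻¹) ^ 2 ≠ t := by
        intro hEq
        have hx3 : x = t ^ 3 := by
          have hinv : (t⁻¹) ^ 2 * t ^ 2 = 1 := by
            rw [← mul_pow, inv_mul_cancel₀ ht, one_pow]
          calc x = x * ((t⁻¹) ^ 2 * t ^ 2) := by rw [hinv, mul_one]
          _ = (x * (t⁻¹) ^ 2) * t ^ 2 := by ring
          _ = t * t ^ 2 := by rw [hEq]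
          _ = t ^ 3 := by ring
        subst hx3
        have h6 : t ^ 6 = 0 := by linear_combination hx - t ^ 3 * h2
        exact ht (pow_eq_zero_iff (by norm_num) |>.1 h6)
      have ht' : t ^ 3 + g t * t ^ 2 + 1 = 0 := by
        simpa [hR, mem_filter] using hg_root t ht
      have := card_three' h2 hst hsroot ht'
      simpa [hR] using this
  -- the Artin–Schreier image has q/2 elements
  set Im := univ.image (fun x : F => x ^ 2 + x) with hIm
  have hImcard : 2 ^ (2 * m + 1) = 2 * Im.card := by
    rw [← hcard, ← Finset.card_univ,
      Finset.card_eq_sum_card_fiberwise (f := fun x : F => x ^ 2 + x) (t := Im)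
        (fun x _ => mem_image_of_mem _ (mem_univ x))]
    have hfib2 : ∀ u ∈ Im, (univ.filter fun x : F => x ^ 2 + x = u).card = 2 := by
      intro u hu
      obtain ⟨x, -, rfl⟩ := Finset.mem_image.1 hu
      have hpair : (univ.filter fun y : F => y ^ 2 + y = x ^ 2 + x) = {x, x + 1} := by
        ext y
        simp only [mem_filter, mem_univ, true_and, mem_insert, mem_singleton]
        constructor
        · intro hy
          have key : (x + y) * (x + y + 1) = 0 := by
            linear_combination hy + (x ^ 2 + x * y + x) * h2
          rcases mul_eq_zero.1 key with h | h
          · left; linear_combination h - x * h2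
          · right; linear_combination h - (x + 1) * h2
        · rintro (rfl | rfl)
          · rfl
          · linear_combination (x + 1) * h2
      rw [hpair, card_insert_of_notMem, card_singleton]
      simp only [mem_singleton]
      intro h
      exact one_ne_zero (by linear_combination -h : (1 : F) = 0)
    have : ∑ u ∈ Im, (univ.filter fun x : F => x ^ 2 + x = u).card = ∑ _u ∈ Im, 2 :=
      Finset.sum_congr rfl hfib2
    rw [this, Finset.sum_const, smul_eq_mul, mul_comm]
  -- cubing is injective
  have hcube : Function.Injective (fun x : F => x ^ 3) := by
    have hcop : Nat.Coprime 3 (Fintype.card F - 1) := by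
      rw [hcard]
      have h4 : 4 ^ m % 3 = 1 := by
        rw [Nat.pow_mod]
        norm_num
      have hpow : 2 ^ (2 * m + 1) = 4 ^ m * 2 := by
        rw [pow_succ, pow_mul]
        norm_num
      have hmod : 2 ^ (2 * m + 1) % 3 = 2 := by
        rw [hpow, Nat.mul_mod, h4]
      have hge : 2 ≤ 2 ^ (2 * m + 1) := by
        calc 2 = 2 ^ 1 := (pow_one 2).symm
        _ ≤ 2 ^ (2 * m + 1) := Nat.pow_le_pow_right (by norm_num) (by omega)
      refine (Nat.Prime.coprime_iff_not_dvd (by norm_num)).2 ?_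
      intro hdvd
      omega
    intro a b hab
    simp only at hab
    by_cases hb : b = 0
    · subst hb
      have h0 : a ^ 3 = 0 := by rw [hab]; ring
      exact pow_eq_zero_iff (by norm_num) |>.1 h0
    · have ha : a ≠ 0 := by
        intro h
        subst h
        refine hb (pow_eq_zero_iff (n := 3) (by norm_num) |>.1 ?_)
        rw [← hab]
        ring
      have hu : (a / b) ^ 3 = 1 := by rw [div_pow, hab, div_self (pow_ne_zero _ hb)]
      have hd1 : orderOf (a / b) ∣ 3 := orderOf_dvd_of_pow_eq_one hu
      have hd2 : orderOf (a / b) ∣ Fintype.card F - 1 :=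
        orderOf_dvd_of_pow_eq_one (FiniteField.pow_card_sub_one_eq_one _ (div_ne_zero ha hb))
      have hone : a / b = 1 := orderOf_eq_one_iff.1
        (Nat.dvd_one.1 (hcop ▸ Nat.dvd_gcd hd1 hd2))
      field_simp at hone
      exact hone
  -- T3 is in bijection with the nonzero Artin–Schreier values
  have himg : T3.image (fun t : F => t ^ 3) = Im.erase 0 := by
    ext u
    simp only [hT3, hIm, Finset.mem_image, Finset.mem_erase, mem_filter, mem_univ, true_and]
    constructor
    · rintro ⟨t, ⟨ht0, ht3⟩, rfl⟩
      refine ⟨pow_ne_zero 3 ht0, ?_⟩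
      obtain ⟨x, hx⟩ := (hiff t ht0).1 ht3
      exact ⟨x, by linear_combination hx - t ^ 3 * h2⟩
    · rintro ⟨hu0, x, hx⟩
      obtain ⟨t, rfl⟩ := Finite.injective_iff_surjective.1 hcube u
      simp only at hx hu0 ⊢
      have ht0 : t ≠ 0 := fun h => hu0 (by rw [h]; ring)
      exact ⟨t, ⟨ht0, (hiff t ht0).2 ⟨x, by linear_combination hx + t ^ 3 * h2⟩⟩, rfl⟩
  have h0Im : (0 : F) ∈ Im := Finset.mem_image.2 ⟨0, mem_univ 0, by ring⟩
  have hT3U : T3.card = Im.card - 1 := by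
    rw [← Finset.card_image_of_injective T3 hcube, himg, Finset.card_erase_of_mem h0Im]
  have hImpos : 1 ≤ Im.card := Finset.card_pos.2 ⟨0, h0Im⟩
  -- put everything together
  constructor
  · have hempty : ({β : F | ({t : F | t ^ 3 + β * t ^ 2 + 1 = 0} : Set F).ncard = 2}
        : Set F) = ∅ := by
      ext β
      simp only [Set.mem_setOf_eq, Set.mem_empty_iff_false, iff_false]
      rw [hncard β]
      rcases h013 β with h | h | h <;> omega
    rw [hempty, Set.ncard_empty]
  · have hcoe : ({β : F | ({t : F | t ^ 3 + β * t ^ 2 + 1 = 0} : Set F).ncard = 1} : Set F)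
        = ↑(univ.filter fun β : F => (R β).card = 1) := by
      ext β
      simp only [Set.mem_setOf_eq, Finset.coe_filter, mem_univ, true_and]
      rw [hncard β]
    rw [hcoe, Set.ncard_coe_finset, ← hn1]
    have hq : 2 ^ (2 * m + 1) = 2 * 2 ^ (2 * m) := by ring
    omega
end

section
/- Let q = 2^(2m) with m ≥ 1. Then there is no β ∈ F_q for which the cubic polynomial t³ + βt² + 1 has exactly two roots in F_q, and the number of β ∈ F_q for which it has exactly one root in F_q equals the number of β ∈ F_q with Tr(β³) = 1. -/
set_option linter.unusedSectionVars false
open Finset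

namespace Stmt4Aux
variable {F : Type*} [Field F] [Fintype F] [DecidableEq F]

lemma trace_sq [CharP F 2] [Algebra (ZMod 2) F] (x : F) :
    Algebra.trace (ZMod 2) F (x ^ 2) = Algebra.trace (ZMod 2) F x := by
  let e : F ≃ₐ[ZMod 2] F :=
    AlgEquiv.ofRingEquiv (f := frobeniusEquiv F 2) (by
      intro r
      show frobenius F 2 (algebraMap (ZMod 2) F r) = algebraMap (ZMod 2) F r
      rw [frobenius_def, ← map_pow]
      congr 1
      revert r; decide)
  have := Algebra.trace_eq_of_algEquiv e x
  have he : e x = x ^ 2 := rfl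
  rwa [he] at this

lemma exists_trace_one [CharP F 2] [Algebra (ZMod 2) F] [FiniteDimensional (ZMod 2) F] :
    ∃ b : F, Algebra.trace (ZMod 2) F b = 1 := by
  have h := Algebra.trace_ne_zero (ZMod 2) F
  obtain ⟨b, hb⟩ : ∃ b : F, Algebra.trace (ZMod 2) F b ≠ 0 := by
    by_contra hc
    push_neg at hc
    exact h (LinearMap.ext fun x => hc x)
  refine ⟨b, ?_⟩
  have : ∀ a : ZMod 2, a ≠ 0 → a = 1 := by decide
  exact this _ hb

variable [CharP F 2] [Algebra (ZMod 2) F] [FiniteDimensional (ZMod 2) F]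

/-- number of elements with trace one equals number with trace zero -/
lemma card_trace_one :
    2 * (univ.filter fun x : F => Algebra.trace (ZMod 2) F x = 0).card = Fintype.card F := by
  obtain ⟨b, hb⟩ := exists_trace_one (F := F)
  have key : (univ.filter fun x : F => Algebra.trace (ZMod 2) F x = 0).card
      = (univ.filter fun x : F => ¬ Algebra.trace (ZMod 2) F x = 0).card := by
    apply Finset.card_bij (fun x _ => x + b)
    · intro a ha
      simp only [mem_filter, mem_univ, true_and] at ha ⊢
      rw [map_add, ha, hb]
      decide
    · intro a ha a' ha' h
      exact add_right_cancel h
    · intro c hc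
      simp only [mem_filter, mem_univ, true_and] at hc ⊢
      refine ⟨c + b, ?_, by rw [add_assoc, CharTwo.add_self_eq_zero, add_zero]⟩
      have : ∀ a : ZMod 2, ¬ a = 0 → a = 1 := by decide
      rw [map_add, this _ hc, hb]
      decide
  have := Finset.card_filter_add_card_filter_not
    (s := (univ : Finset F)) (p := fun x => Algebra.trace (ZMod 2) F x = 0)
  rw [card_univ] at this
  omega

/-- Artin-Schreier: x^2+x=c solvable iff trace c = 0, and then exactly 2 solutions. -/
lemma card_AS (c : F) :
    (univ.filter fun x : F => x ^ 2 + x = c).card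
      = if Algebra.trace (ZMod 2) F c = 0 then 2 else 0 := by
  have h2 : (2 : F) = 0 := by
    have := CharP.cast_eq_zero F 2; exact_mod_cast this
  have htr : ∀ x : F, Algebra.trace (ZMod 2) F (x ^ 2 + x) = 0 := by
    intro x
    rw [map_add, trace_sq]
    exact CharTwo.add_self_eq_zero _
  have hfib : ∀ d x0 : F, x0 ^ 2 + x0 = d →
      (univ.filter fun x : F => x ^ 2 + x = d) = {x0, x0 + 1} := by
    intro d x0 h0
    ext x
    simp only [mem_filter, mem_univ, true_and, mem_insert, mem_singleton]
    constructor
    · intro hx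
      have : (x - x0) * (x - x0 - 1) = 0 := by
        linear_combination hx - h0 + (x0 ^ 2 - x * x0 - x + x0) * h2
      rcases mul_eq_zero.mp this with h | h
      · left; linear_combination h
      · right; linear_combination h
    · rintro (rfl | rfl)
      · exact h0
      · linear_combination h0 + (x0 + 1) * h2
  have hfc : ∀ d x0 : F, x0 ^ 2 + x0 = d →
      (univ.filter fun x : F => x ^ 2 + x = d).card = 2 := by
    intro d x0 h0
    rw [hfib d x0 h0, Finset.card_insert_of_notMem, Finset.card_singleton]
    simp only [mem_singleton]
    intro hx
    exact one_ne_zero (α := F) (by linear_combination -hx)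
  by_cases hc : Algebra.trace (ZMod 2) F c = 0
  · rw [if_pos hc]
    obtain ⟨x0, h0⟩ : ∃ x0 : F, x0 ^ 2 + x0 = c := by
      set I : Finset F := univ.image (fun x : F => x ^ 2 + x) with hI
      set K : Finset F := univ.filter (fun x : F => Algebra.trace (ZMod 2) F x = 0) with hK
      have hsub : I ⊆ K := by
        intro y hy
        simp only [hI, mem_image, mem_univ, true_and] at hy
        obtain ⟨x, rfl⟩ := hy
        simp only [hK, mem_filter, mem_univ, true_and]
        exact htr x
      have hcardI : 2 * I.card = Fintype.card F := by
        have h1 := Finset.card_eq_sum_card_fiberwise (s := (univ : Finset F)) (t := I)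
          (f := fun x : F => x ^ 2 + x) (fun x _ => mem_image_of_mem _ (mem_univ x))
        rw [card_univ] at h1
        have h3 : ∑ y ∈ I, (univ.filter fun a : F => a ^ 2 + a = y).card = 2 * I.card := by
          rw [Finset.sum_congr rfl (fun y hy => ?_), Finset.sum_const, smul_eq_mul, mul_comm]
          simp only [hI, mem_image, mem_univ, true_and] at hy
          obtain ⟨x0, h0⟩ := hy
          exact hfc y x0 h0
        rw [h1, ← h3]
      have hKcard : 2 * K.card = Fintype.card F := card_trace_one
      have hIK : I = K := Finset.eq_of_subset_of_card_le hsub (by omega)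
      have : c ∈ I := by rw [hIK, hK]; simp [hc]
      simp only [hI, mem_image, mem_univ, true_and] at this
      exact this
    exact hfc c x0 h0
  · rw [if_neg hc]
    rw [Finset.card_eq_zero, Finset.filter_eq_empty_iff]
    intro x _ hx
    exact hc (hx ▸ htr x)

variable (F) in
/-- the root set of `t^3 + β t^2 + 1` -/
def R (β : F) : Finset F := univ.filter fun t => t ^ 3 + β * t ^ 2 + 1 = 0

lemma mem_R {β t : F} : t ∈ R F β ↔ t ^ 3 + β * t ^ 2 + 1 = 0 := by
  simp [R]

lemma root_ne_zero {β t : F} (ht : t ∈ R F β) : t ≠ 0 := by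
  rintro rfl
  rw [mem_R] at ht
  simp at ht

lemma card_R_le (β : F) : (R F β).card ≤ 3 := by
  classical
  set p : Polynomial F := Polynomial.X ^ 3 + Polynomial.C β * Polynomial.X ^ 2 + 1 with hp
  have hdeg : p.natDegree = 3 := by
    rw [hp]; compute_degree!
  have hp0 : p ≠ 0 := fun h => by simp [h] at hdeg
  have hsub : R F β ⊆ p.roots.toFinset := by
    intro t ht
    rw [mem_R] at ht
    rw [Multiset.mem_toFinset, Polynomial.mem_roots hp0]
    simpa [hp, Polynomial.IsRoot] using ht
  calc (R F β).card ≤ p.roots.toFinset.card := Finset.card_le_card hsub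
    _ ≤ Multiset.card p.roots := Multiset.toFinset_card_le _
    _ ≤ p.natDegree := Polynomial.card_roots' p
    _ = 3 := hdeg

lemma card_R_ne_two (β : F) : (R F β).card ≠ 2 := by
  have h2 : (2 : F) = 0 := by
    have := CharP.cast_eq_zero F 2; exact_mod_cast this
  intro hcard
  obtain ⟨t, t', htt', hR⟩ := Finset.card_eq_two.mp hcard
  have e1 : t ^ 3 + β * t ^ 2 + 1 = 0 := mem_R.mp (hR ▸ Finset.mem_insert_self t {t'})
  have e2 : t' ^ 3 + β * t' ^ 2 + 1 = 0 := mem_R.mp (hR ▸ Finset.mem_insert_of_mem (Finset.mem_singleton_self t'))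
  have hkey : (t - t') * (t ^ 2 + t * t' + t' ^ 2 + β * (t + t')) = 0 := by
    linear_combination e1 - e2
  have hβ : t ^ 2 + t * t' + t' ^ 2 + β * (t + t') = 0 :=
    (mul_eq_zero.mp hkey).resolve_left (sub_ne_zero.mpr htt')
  have hrroot : (-β - t - t') ^ 3 + β * (-β - t - t') ^ 2 + 1 = 0 := by
    have h3 : (t - t') * ((-β - t - t') ^ 3 + β * (-β - t - t') ^ 2 + 1) = 0 := by
      linear_combination ((-β - t - t') - t') * e1 - ((-β - t - t') - t) * e2
    exact (mul_eq_zero.mp h3).resolve_left (sub_ne_zero.mpr htt')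
  have hmem : (-β - t - t') ∈ R F β := mem_R.mpr hrroot
  rw [hR, Finset.mem_insert, Finset.mem_singleton] at hmem
  rcases hmem with hb | hb
  · have ht2 : t ^ 2 = 0 := by
      linear_combination -hβ - (t + t') * hb - t * t' * h2
    have ht0 : t = 0 := (pow_eq_zero_iff two_ne_zero).mp ht2
    rw [ht0] at e1
    simp at e1
  · have ht2 : t' ^ 2 = 0 := by
      linear_combination -hβ - (t + t') * hb - t * t' * h2
    have ht0 : t' = 0 := (pow_eq_zero_iff two_ne_zero).mp ht2
    rw [ht0] at e2
    simp at e2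

lemma h2F [CharP F 2] : (2 : F) = 0 := by
  have := CharP.cast_eq_zero F 2; exact_mod_cast this

lemma sum_card_R : ∑ β : F, (R F β).card = Fintype.card F - 1 := by
  have h2 : (2 : F) = 0 := h2F
  set P : Finset (F × F) := univ.filter (fun p : F × F => p.2 ^ 3 + p.1 * p.2 ^ 2 + 1 = 0)
    with hP
  have hfib : P.card = ∑ β : F, (R F β).card := by
    rw [Finset.card_eq_sum_card_fiberwise (s := P) (t := univ) (f := Prod.fst)
      (fun x _ => mem_univ _)]
    refine Finset.sum_congr rfl fun β _ => ?_
    apply Finset.card_bij (fun p _ => p.2)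
    · intro p hp
      simp only [hP, mem_filter, mem_univ, true_and] at hp
      obtain ⟨hroot, h1⟩ := hp
      rw [mem_R, ← h1]
      exact hroot
    · intro p hp p' hp' h
      simp only [hP, mem_filter] at hp hp'
      exact Prod.ext (hp.2.trans hp'.2.symm) h
    · intro t ht
      rw [mem_R] at ht
      exact ⟨(β, t), by simp [hP, ht], rfl⟩
  have hbij : P.card = ((univ : Finset F).erase 0).card := by
    symm
    apply Finset.card_bij (fun t _ => (((t ^ 3 + 1) / t ^ 2 : F), t))
    · intro t ht
      have ht0 : t ≠ 0 := ne_of_mem_erase ht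
      simp only [hP, mem_filter, mem_univ, true_and]
      field_simp
      linear_combination (t ^ 3 + 1) * h2
    · intro a ha b hb h
      exact congrArg Prod.snd h
    · rintro ⟨β, t⟩ hp
      simp only [hP, mem_filter, mem_univ, true_and] at hp
      have ht0 : t ≠ 0 := by
        rintro rfl
        simp at hp
      refine ⟨t, Finset.mem_erase.mpr ⟨ht0, mem_univ _⟩, ?_⟩
      have hβ : β * t ^ 2 = t ^ 3 + 1 := by
        linear_combination hp - (t ^ 3 + 1) * h2
      have : (t ^ 3 + 1) / t ^ 2 = β := by
        rw [div_eq_iff (pow_ne_zero _ ht0), ← hβ, mul_comm]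
      rw [this]
  rw [← hfib, hbij, Finset.card_erase_of_mem (mem_univ _), card_univ]

lemma sum_card_R_offdiag :
    ∑ β : F, (R F β).card * ((R F β).card - 1)
      = ((univ : Finset (F × F)).filter
          (fun p : F × F => p.1 ≠ 0 ∧ p.2 ^ 2 + p.2 = p.1 ^ 3)).card := by
  have h2 : (2 : F) = 0 := h2F
  set E : Finset (F × F × F) := univ.filter (fun z : F × F × F =>
      z.2.1 ≠ z.2.2 ∧ z.2.1 ^ 3 + z.1 * z.2.1 ^ 2 + 1 = 0 ∧
      z.2.2 ^ 3 + z.1 * z.2.2 ^ 2 + 1 = 0) with hE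
  have hfib : E.card = ∑ β : F, (R F β).card * ((R F β).card - 1) := by
    rw [Finset.card_eq_sum_card_fiberwise (s := E) (t := univ) (f := Prod.fst)
      (fun x _ => mem_univ _)]
    refine Finset.sum_congr rfl fun β _ => ?_
    have : (E.filter (fun z => z.1 = β)).card = ((R F β).offDiag).card := by
      apply Finset.card_bij (fun z _ => (z.2.1, z.2.2))
      · intro z hz
        simp only [hE, mem_filter, mem_univ, true_and] at hz
        obtain ⟨⟨hne, ha, hb⟩, h1⟩ := hz
        subst h1
        exact Finset.mem_offDiag.mpr ⟨mem_R.mpr ha, mem_R.mpr hb, hne⟩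
      · intro z hz z' hz' h
        simp only [hE, mem_filter] at hz hz'
        have h1 : z.2 = z'.2 := Prod.ext (congrArg Prod.fst h) (congrArg Prod.snd h)
        exact Prod.ext (hz.2.trans hz'.2.symm) h1
      · rintro ⟨t, t'⟩ hp
        rw [Finset.mem_offDiag] at hp
        exact ⟨(β, t, t'), by simp [hE, hp.2.2, mem_R.mp hp.1, mem_R.mp hp.2.1], rfl⟩
    rw [this, Finset.offDiag_card, Nat.mul_sub_one]
  rw [← hfib]
  apply Finset.card_bij (fun z _ => ((z.2.1 : F), z.2.1 ^ 2 * z.2.2))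
  · rintro ⟨β, t, t'⟩ hz
    simp only [hE, mem_filter, mem_univ, true_and] at hz
    obtain ⟨hne, e1, e2⟩ := hz
    have ht0 : t ≠ 0 := root_ne_zero (mem_R.mpr e1)
    simp only [mem_filter, mem_univ, true_and]
    refine ⟨ht0, ?_⟩
    have hkey : (t - t') * (t ^ 2 * t' ^ 2 - t - t') = 0 := by
      linear_combination t' ^ 2 * e1 - t ^ 2 * e2
    have hD : t ^ 2 * t' ^ 2 - t - t' = 0 :=
      (mul_eq_zero.mp hkey).resolve_left (sub_ne_zero.mpr hne)
    linear_combination t ^ 2 * hD + t ^ 2 * t' * h2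
  · rintro ⟨β, t, t'⟩ hz ⟨γ, s, s'⟩ hz' h
    simp only [hE, mem_filter, mem_univ, true_and] at hz hz'
    obtain ⟨hne, e1, e2⟩ := hz
    obtain ⟨hne', f1, f2⟩ := hz'
    have hts : t = s := congrArg Prod.fst h
    subst hts
    have ht0 : t ≠ 0 := root_ne_zero (mem_R.mpr e1)
    have h2nd : t ^ 2 * t' = t ^ 2 * s' := congrArg Prod.snd h
    have hts' : t' = s' := by
      have := mul_left_cancel₀ (pow_ne_zero 2 ht0) h2nd
      exact this
    subst hts'
    have hβγ : β = γ := by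
      have hh : β * t ^ 2 = γ * t ^ 2 := by linear_combination e1 - f1
      have := mul_right_cancel₀ (pow_ne_zero 2 ht0) hh
      exact this
    rw [hβγ]
  · rintro ⟨u, x⟩ hp
    simp only [mem_filter, mem_univ, true_and] at hp
    obtain ⟨hu0, hx⟩ := hp
    refine ⟨(((u ^ 3 + 1) / u ^ 2 : F), u, x / u ^ 2), ?_, ?_⟩
    · simp only [hE, mem_filter, mem_univ, true_and]
      refine ⟨?_, ?_, ?_⟩
      · intro huu
        have hxu : x = u ^ 3 := by
          field_simp at huu
          linear_combination -huu
        have hu6 : u ^ 6 = 0 := by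
          rw [hxu] at hx
          linear_combination hx
        exact hu0 ((pow_eq_zero_iff (n := 6) (by norm_num)).mp hu6)
      · field_simp
        linear_combination (u ^ 3 + 1) * h2
      · have h6 : x ^ 3 + (u ^ 3 + 1) * x ^ 2 + u ^ 6 = 0 := by
          linear_combination (x + u ^ 3) * hx + u ^ 6 * h2
        field_simp
        linear_combination h6
    · have : u ^ 2 * (x / u ^ 2) = x := by
        field_simp
      rw [this]

lemma card_G :
    ((univ : Finset (F × F)).filter
        (fun p : F × F => p.1 ≠ 0 ∧ p.2 ^ 2 + p.2 = p.1 ^ 3)).card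
      = 2 * ((univ : Finset F).filter
          (fun t : F => t ≠ 0 ∧ Algebra.trace (ZMod 2) F (t ^ 3) = 0)).card := by
  set G : Finset (F × F) := univ.filter (fun p : F × F => p.1 ≠ 0 ∧ p.2 ^ 2 + p.2 = p.1 ^ 3)
    with hG
  rw [Finset.card_eq_sum_card_fiberwise (s := G) (t := univ) (f := Prod.fst)
    (fun x _ => mem_univ _)]
  have hstep : ∀ u : F, (G.filter (fun p => p.1 = u)).card
      = if u ≠ 0 ∧ Algebra.trace (ZMod 2) F (u ^ 3) = 0 then 2 else 0 := by
    intro u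
    by_cases hu : u = 0
    · subst hu
      rw [if_neg (by simp)]
      rw [Finset.card_eq_zero, Finset.filter_eq_empty_iff]
      rintro ⟨a, b⟩ hab
      simp only [hG, mem_filter, mem_univ, true_and] at hab
      rintro rfl
      exact hab.1 rfl
    · have hbij : (G.filter (fun p => p.1 = u)).card
          = ((univ : Finset F).filter (fun x : F => x ^ 2 + x = u ^ 3)).card := by
        apply Finset.card_bij (fun p _ => p.2)
        · intro p hp
          simp only [hG, mem_filter, mem_univ, true_and] at hp ⊢
          rw [← hp.2]
          exact hp.1.2
        · intro p hp p' hp' h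
          simp only [hG, mem_filter] at hp hp'
          exact Prod.ext (hp.2.trans hp'.2.symm) h
        · intro x hx
          simp only [mem_filter, mem_univ, true_and] at hx
          exact ⟨(u, x), by simp [hG, hx, hu], rfl⟩
      rw [hbij, card_AS (u ^ 3)]
      by_cases htr : Algebra.trace (ZMod 2) F (u ^ 3) = 0
      · rw [if_pos htr, if_pos ⟨hu, htr⟩]
      · rw [if_neg htr, if_neg (fun h => htr h.2)]
  rw [Finset.sum_congr rfl (fun u _ => hstep u)]
  rw [Finset.sum_ite, Finset.sum_const, Finset.sum_const, smul_eq_mul, smul_eq_mul,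
    mul_zero, add_zero, mul_comm]

lemma card_Z_add_T :
    ((univ : Finset F).filter
        (fun t : F => t ≠ 0 ∧ Algebra.trace (ZMod 2) F (t ^ 3) = 0)).card
      + ((univ : Finset F).filter
        (fun β : F => Algebra.trace (ZMod 2) F (β ^ 3) = 1)).card
      = Fintype.card F - 1 := by
  have key := Finset.card_filter_add_card_filter_not
    (s := (univ : Finset F).erase 0) (p := fun t : F => Algebra.trace (ZMod 2) F (t ^ 3) = 0)
  rw [Finset.card_erase_of_mem (mem_univ _), card_univ] at key
  have h1 : ((univ : Finset F).erase 0).filter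
      (fun t : F => Algebra.trace (ZMod 2) F (t ^ 3) = 0)
      = (univ : Finset F).filter (fun t : F => t ≠ 0 ∧ Algebra.trace (ZMod 2) F (t ^ 3) = 0) := by
    ext t
    simp only [Finset.mem_filter, Finset.mem_erase, mem_univ, true_and, and_true]
  have h2 : ((univ : Finset F).erase 0).filter
      (fun t : F => ¬ Algebra.trace (ZMod 2) F (t ^ 3) = 0)
      = (univ : Finset F).filter (fun β : F => Algebra.trace (ZMod 2) F (β ^ 3) = 1) := by
    ext t
    simp only [Finset.mem_filter, Finset.mem_erase, mem_univ, true_and]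
    constructor
    · rintro ⟨⟨ht0, -⟩, htr⟩
      have : ∀ a : ZMod 2, ¬ a = 0 → a = 1 := by decide
      exact this _ htr
    · intro htr
      refine ⟨⟨?_, trivial⟩, ?_⟩
      · rintro rfl
        rw [zero_pow (by norm_num), map_zero] at htr
        exact one_ne_zero htr.symm
      · rw [htr]; decide
  rw [h1, h2] at key
  exact key

lemma count_one_eq_count_trace :
    ((univ : Finset F).filter (fun β : F => (R F β).card = 1)).card
      = ((univ : Finset F).filter
          (fun β : F => Algebra.trace (ZMod 2) F (β ^ 3) = 1)).card := by
  set q := Fintype.card F with hq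
  set n1 := ((univ : Finset F).filter (fun β : F => (R F β).card = 1)).card with hn1
  set n3 := ((univ : Finset F).filter (fun β : F => (R F β).card = 3)).card with hn3
  have hvals : ∀ β : F, (R F β).card = 0 ∨ (R F β).card = 1 ∨ (R F β).card = 3 := by
    intro β
    have := card_R_le (F := F) β
    have := card_R_ne_two (F := F) β
    omega
  have hsum1 : ∑ β : F, (R F β).card = n1 * 1 + n3 * 3 := by
    have : ∀ β : F, (R F β).card
        = (if (R F β).card = 1 then 1 else 0) + (if (R F β).card = 3 then 3 else 0) := by
      intro β
      rcases hvals β with h | h | h <;> rw [h] <;> norm_num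
    rw [Finset.sum_congr rfl (fun β _ => this β), Finset.sum_add_distrib]
    congr 1
    · rw [← Finset.sum_filter, Finset.sum_const, smul_eq_mul]
    · rw [← Finset.sum_filter, Finset.sum_const, smul_eq_mul]
  have hsum2 : ∑ β : F, (R F β).card * ((R F β).card - 1) = n3 * 6 := by
    have : ∀ β : F, (R F β).card * ((R F β).card - 1)
        = (if (R F β).card = 3 then 6 else 0) := by
      intro β
      rcases hvals β with h | h | h <;> rw [h] <;> norm_num
    rw [Finset.sum_congr rfl (fun β _ => this β), ← Finset.sum_filter, Finset.sum_const,
      smul_eq_mul]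
  have e1 : n1 * 1 + n3 * 3 = q - 1 := by rw [← hsum1]; exact sum_card_R
  have e2 : n3 * 6 = 2 * ((univ : Finset F).filter
      (fun t : F => t ≠ 0 ∧ Algebra.trace (ZMod 2) F (t ^ 3) = 0)).card := by
    rw [← hsum2, sum_card_R_offdiag, card_G]
  have e3 := card_Z_add_T (F := F)
  have hq1 : 1 ≤ q := Fintype.card_pos
  omega

end Stmt4Aux

/-- Let `q = 2^(2m)` with `m ≥ 1`. Then there is no `β ∈ F_q` for which
`t³ + βt² + 1` has exactly two roots in `F_q`, and the number of `β ∈ F_q` for which it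
has exactly one root in `F_q` equals the number of `β ∈ F_q` with `Tr(β³) = 1`, where
`Tr` is the absolute trace `F_q → F_2`. -/
theorem stmt4 (m : ℕ) (hm : 1 ≤ m) :
    ({β : GaloisField 2 (2 * m) |
        ({t : GaloisField 2 (2 * m) | t ^ 3 + β * t ^ 2 + 1 = 0} :
          Set (GaloisField 2 (2 * m))).ncard = 2} : Set (GaloisField 2 (2 * m))).ncard = 0 ∧
    ({β : GaloisField 2 (2 * m) |
        ({t : GaloisField 2 (2 * m) | t ^ 3 + β * t ^ 2 + 1 = 0} :
          Set (GaloisField 2 (2 * m))).ncard = 1} : Set (GaloisField 2 (2 * m))).ncard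
      = ({β : GaloisField 2 (2 * m) |
          Algebra.trace (ZMod 2) (GaloisField 2 (2 * m)) (β ^ 3) = 1} :
            Set (GaloisField 2 (2 * m))).ncard := by
  set F := GaloisField 2 (2 * m) with hF
  letI : Fintype F := Fintype.ofFinite F
  letI : DecidableEq F := Classical.decEq F
  have hR : ∀ β : F, ({t : F | t ^ 3 + β * t ^ 2 + 1 = 0} : Set F).ncard
      = (Stmt4Aux.R F β).card := by
    intro β
    have : ({t : F | t ^ 3 + β * t ^ 2 + 1 = 0} : Set F) = ↑(Stmt4Aux.R F β) := by
      ext t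
      simp [Stmt4Aux.mem_R]
    rw [this, Set.ncard_coe_finset]
  constructor
  · have : ({β : F | ({t : F | t ^ 3 + β * t ^ 2 + 1 = 0} : Set F).ncard = 2} : Set F)
        = (∅ : Set F) := by
      rw [Set.eq_empty_iff_forall_notMem]
      intro β hβ
      rw [Set.mem_setOf_eq, hR β] at hβ
      exact Stmt4Aux.card_R_ne_two β hβ
    rw [this, Set.ncard_empty]
  · have h1 : ({β : F | ({t : F | t ^ 3 + β * t ^ 2 + 1 = 0} : Set F).ncard = 1} : Set F)
        = ↑((univ : Finset F).filter (fun β : F => (Stmt4Aux.R F β).card = 1)) := by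
      ext β
      simp only [Set.mem_setOf_eq, Finset.coe_filter, Finset.mem_univ, true_and, hR β]
    have h2 : ({β : F | Algebra.trace (ZMod 2) F (β ^ 3) = 1} : Set F)
        = ↑((univ : Finset F).filter
            (fun β : F => Algebra.trace (ZMod 2) F (β ^ 3) = 1)) := by
      ext β
      simp only [Set.mem_setOf_eq, Finset.coe_filter, Finset.mem_univ, true_and]
    rw [h1, h2, Set.ncard_coe_finset, Set.ncard_coe_finset]
    exact Stmt4Aux.count_one_eq_count_trace
end

section
/- Let q = 2^(2m) with m ≥ 1. Then the number of β ∈ F_q with Tr(β³) = 1 equals 2^(2m-1) + (-2)^m, i.e. q/2 + (-1)^m √q. -/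
open Finset Polynomial

section

namespace Stmt5Aux

def eps : ZMod 2 → ℤ := fun t => if t = 0 then 1 else -1

lemma eps_add : ∀ s t : ZMod 2, eps (s + t) = eps s * eps t := by decide

lemma eps_zero : eps 0 = 1 := rfl
lemma eps_one : eps 1 = -1 := rfl

variable {F : Type*} [Field F] [Fintype F] [Algebra (ZMod 2) F]

lemma charF : CharP F 2 :=
  charP_of_injective_algebraMap (algebraMap (ZMod 2) F).injective 2

lemma trace_frob (x : F) :
    Algebra.trace (ZMod 2) F (x ^ 2) = Algebra.trace (ZMod 2) F x := by
  haveI := charF (F := F)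
  have hr : ∀ r : ZMod 2, r ^ 2 = r := by decide
  let e : F ≃ₐ[ZMod 2] F :=
    AlgEquiv.ofBijective
      { toRingHom := frobenius F 2
        commutes' := fun r =>
          show frobenius F 2 (algebraMap (ZMod 2) F r) = algebraMap (ZMod 2) F r by
            rw [frobenius_def, ← map_pow, hr r] }
      ((Finite.injective_iff_bijective).mp (frobenius_inj F 2))
  have h := Algebra.trace_eq_of_algEquiv e x
  have he : e x = x ^ 2 := rfl
  rw [he] at h
  exact h

lemma sum_eps_mul {c : F} (hc : c ≠ 0) :
    ∑ x : F, eps (Algebra.trace (ZMod 2) F (c * x)) = 0 := by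
  obtain ⟨y, hy⟩ := Algebra.trace_surjective (ZMod 2) F 1
  have hcx : Algebra.trace (ZMod 2) F (c * (c⁻¹ * y)) = 1 := by
    rw [← mul_assoc, mul_inv_cancel₀ hc, one_mul]; exact hy
  have key : ∑ x : F, eps (Algebra.trace (ZMod 2) F (c * x))
      = - ∑ x : F, eps (Algebra.trace (ZMod 2) F (c * x)) := by
    nth_rewrite 1 [← Fintype.sum_equiv (Equiv.addRight (c⁻¹ * y))
      (fun x => eps (Algebra.trace (ZMod 2) F (c * (x + c⁻¹ * y))))
      (fun x => eps (Algebra.trace (ZMod 2) F (c * x))) (fun x => rfl)]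
    rw [← Finset.sum_neg_distrib]
    refine Finset.sum_congr rfl fun x _ => ?_
    rw [mul_add, map_add, eps_add, hcx, eps_one]
    ring
  linarith

end Stmt5Aux

namespace Stmt5Aux
variable {F : Type*} [Field F] [Fintype F] [Algebra (ZMod 2) F]

lemma sum_eps_c [DecidableEq F] (c : F) :
    ∑ x : F, eps (Algebra.trace (ZMod 2) F (c * x))
      = if c = 0 then (Fintype.card F : ℤ) else 0 := by
  split_ifs with h
  · subst h
    simp [eps_zero]
  · exact sum_eps_mul h

lemma card_cube_roots [DecidableEq F] (hz : 3 ∣ Fintype.card F - 1) :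
    (univ.filter fun z : F => z ^ 3 = 1).card = 3 := by
  obtain ⟨g, hg⟩ := exists_prime_orderOf_dvd_card (G := Fˣ) 3
    (by rwa [Fintype.card_units])
  have hprim : IsPrimitiveRoot ((g : F)) 3 := by
    rw [IsPrimitiveRoot.coe_units_iff]
    exact hg ▸ IsPrimitiveRoot.orderOf g
  have h1 : (univ.filter fun z : F => z ^ 3 = 1) = nthRootsFinset 3 (1 : F) := by
    ext z
    simp [Polynomial.mem_nthRootsFinset (by norm_num : 0 < 3)]
  rw [h1, hprim.card_nthRootsFinset]

end Stmt5Aux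

namespace Stmt5Aux
variable {F : Type*} [Field F] [Fintype F] [Algebra (ZMod 2) F]

lemma fiber_card [DecidableEq F] (hz : 3 ∣ Fintype.card F - 1) {b : F}
    (hb : b ∈ (univ.erase (0:F)).image (fun x => x ^ 3)) :
    ((univ.erase (0:F)).filter fun x => x ^ 3 = b).card = 3 := by
  obtain ⟨a, ha, hab⟩ := Finset.mem_image.mp hb
  have ha0 : a ≠ 0 := Finset.ne_of_mem_erase ha
  have key : ((univ.erase (0:F)).filter fun x => x ^ 3 = b).card
      = (univ.filter fun z : F => z ^ 3 = 1).card := by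
    apply Finset.card_nbij' (fun x => a⁻¹ * x) (fun z => a * z)
    · intro x hx
      simp only [Finset.mem_coe, Finset.mem_filter, Finset.mem_erase, Finset.mem_univ] at hx ⊢
      refine ⟨trivial, ?_⟩
      rw [mul_pow, hx.2, ← hab, inv_pow, inv_mul_cancel₀ (pow_ne_zero _ ha0)]
    · intro z hz'
      simp only [Finset.mem_coe, Finset.mem_filter, Finset.mem_erase, Finset.mem_univ] at hz' ⊢
      have hzne : z ≠ 0 := by
        intro h; rw [h] at hz'; simp at hz'
      refine ⟨⟨mul_ne_zero ha0 hzne, trivial⟩, ?_⟩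
      rw [mul_pow, hz'.2, mul_one, hab]
    · intro x _; field_simp
    · intro z _; field_simp
  rw [key, card_cube_roots hz]

lemma S_mod [DecidableEq F] (hz : 3 ∣ Fintype.card F - 1) :
    (3:ℤ) ∣ (∑ x : F, eps (Algebra.trace (ZMod 2) F (x ^ 3))) - 1 := by
  have hsplit : eps (Algebra.trace (ZMod 2) F ((0:F) ^ 3))
      + ∑ x ∈ (univ : Finset F).erase 0, eps (Algebra.trace (ZMod 2) F (x ^ 3))
      = ∑ x : F, eps (Algebra.trace (ZMod 2) F (x ^ 3)) :=
    Finset.add_sum_erase univ (fun x : F => eps (Algebra.trace (ZMod 2) F (x ^ 3))) (mem_univ (0:F))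
  have h0 : eps (Algebra.trace (ZMod 2) F ((0:F) ^ 3)) = 1 := by
    rw [zero_pow (by norm_num), map_zero, eps_zero]
  rw [h0] at hsplit
  have hS : (∑ x : F, eps (Algebra.trace (ZMod 2) F (x ^ 3))) - 1
      = ∑ x ∈ (univ : Finset F).erase 0, eps (Algebra.trace (ZMod 2) F (x ^ 3)) := by
    linarith
  rw [hS, Finset.sum_comp (fun c => eps (Algebra.trace (ZMod 2) F c)) (fun x : F => x ^ 3)]
  refine Finset.dvd_sum fun b hb => ?_
  rw [fiber_card hz hb]
  exact Dvd.intro _ (by push_cast; ring)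

end Stmt5Aux

namespace Stmt5Aux
variable {F : Type*} [Field F] [Fintype F] [Algebra (ZMod 2) F]

lemma S_sq [DecidableEq F] (hz : 3 ∣ Fintype.card F - 1)
    (h1 : Algebra.trace (ZMod 2) F 1 = 0) :
    (∑ x : F, eps (Algebra.trace (ZMod 2) F (x ^ 3))) ^ 2
      = 4 * (Fintype.card F : ℤ) := by
  haveI := charF (F := F)
  have h2F : (2 : F) = 0 := CharTwo.two_eq_zero
  have frobbij : Function.Bijective (fun x : F => x ^ 2) :=
    (Finite.injective_iff_bijective).mp (frobenius_inj F 2)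
  -- step 1: expand the square
  have step1 : (∑ x : F, eps (Algebra.trace (ZMod 2) F (x ^ 3))) ^ 2
      = ∑ x : F, ∑ z : F,
          eps (Algebra.trace (ZMod 2) F ((x ^ 2 * (z + z ^ 4)) + z ^ 3)) := by
    rw [sq, Finset.sum_mul_sum]
    refine Finset.sum_congr rfl fun x _ => ?_
    rw [← Fintype.sum_equiv (Equiv.addLeft x)
      (fun z => eps (Algebra.trace (ZMod 2) F (x ^ 3))
        * eps (Algebra.trace (ZMod 2) F ((x + z) ^ 3)))
      (fun y => eps (Algebra.trace (ZMod 2) F (x ^ 3))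
        * eps (Algebra.trace (ZMod 2) F (y ^ 3))) (fun z => rfl)]
    refine Finset.sum_congr rfl fun z _ => ?_
    rw [← eps_add]
    congr 1
    have hpoly : x ^ 3 + (x + z) ^ 3 = x ^ 2 * z + x * z ^ 2 + z ^ 3 := by
      linear_combination (x ^ 3 + x ^ 2 * z + x * z ^ 2) * h2F
    rw [← map_add, hpoly]
    have hfr : Algebra.trace (ZMod 2) F (x * z ^ 2)
        = Algebra.trace (ZMod 2) F (x ^ 2 * z ^ 4) := by
      have h := trace_frob (x * z ^ 2)
      have : (x * z ^ 2) ^ 2 = x ^ 2 * z ^ 4 := by ring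
      rw [this] at h
      exact h.symm
    calc Algebra.trace (ZMod 2) F (x ^ 2 * z + x * z ^ 2 + z ^ 3)
        = Algebra.trace (ZMod 2) F (x ^ 2 * z)
          + Algebra.trace (ZMod 2) F (x * z ^ 2)
          + Algebra.trace (ZMod 2) F (z ^ 3) := by simp [map_add]
      _ = Algebra.trace (ZMod 2) F (x ^ 2 * z)
          + Algebra.trace (ZMod 2) F (x ^ 2 * z ^ 4)
          + Algebra.trace (ZMod 2) F (z ^ 3) := by rw [hfr]
      _ = Algebra.trace (ZMod 2) F (x ^ 2 * (z + z ^ 4) + z ^ 3) := by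
          rw [show x ^ 2 * (z + z ^ 4) + z ^ 3
              = (x ^ 2 * z + x ^ 2 * z ^ 4) + z ^ 3 by ring]
          simp [map_add]
  -- step 2: swap sums and evaluate inner sum
  have step2 : ∀ z : F,
      ∑ x : F, eps (Algebra.trace (ZMod 2) F ((x ^ 2 * (z + z ^ 4)) + z ^ 3))
      = (if z + z ^ 4 = 0 then (Fintype.card F : ℤ) else 0)
          * eps (Algebra.trace (ZMod 2) F (z ^ 3)) := by
    intro z
    have heach : ∀ x : F, eps (Algebra.trace (ZMod 2) F ((x ^ 2 * (z + z ^ 4)) + z ^ 3))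
        = eps (Algebra.trace (ZMod 2) F ((z + z ^ 4) * x ^ 2))
          * eps (Algebra.trace (ZMod 2) F (z ^ 3)) := by
      intro x
      rw [← eps_add, ← map_add, mul_comm (x ^ 2)]
    simp_rw [heach]
    rw [← Finset.sum_mul]
    congr 1
    rw [Fintype.sum_bijective (fun x : F => x ^ 2) frobbij
      (fun x => eps (Algebra.trace (ZMod 2) F ((z + z ^ 4) * x ^ 2)))
      (fun y => eps (Algebra.trace (ZMod 2) F ((z + z ^ 4) * y))) (fun x => rfl)]
    exact sum_eps_c _
  rw [step1, Finset.sum_comm]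
  simp_rw [step2]
  -- step 3: only z with z^4 = z contribute
  have step3 : ∀ z : F,
      (if z + z ^ 4 = 0 then (Fintype.card F : ℤ) else 0)
        * eps (Algebra.trace (ZMod 2) F (z ^ 3))
      = if z ^ 4 = z then (Fintype.card F : ℤ) else 0 := by
    intro z
    have hiff : z + z ^ 4 = 0 ↔ z ^ 4 = z := by
      constructor
      · intro h
        have := eq_neg_of_add_eq_zero_right h
        rwa [CharTwo.neg_eq] at this
      · intro h
        rw [h, CharTwo.add_self_eq_zero]
    by_cases h : z ^ 4 = z
    · rw [if_pos (hiff.mpr h), if_pos h]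
      have heps : eps (Algebra.trace (ZMod 2) F (z ^ 3)) = 1 := by
        rcases eq_or_ne z 0 with rfl | hz0
        · rw [zero_pow (by norm_num), map_zero, eps_zero]
        · have hz3 : z ^ 3 = 1 := by
            have hmul : z * z ^ 3 = z * 1 := by
              rw [mul_one, ← pow_succ']
              exact h
            exact mul_left_cancel₀ hz0 hmul
          rw [hz3, h1, eps_zero]
      rw [heps, mul_one]
    · rw [if_neg (fun hh => h (hiff.mp hh)), if_neg h, zero_mul]
  simp_rw [step3]
  -- step 4: count z with z^4 = z
  have hset : (univ.filter fun z : F => z ^ 4 = z)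
      = insert (0:F) (univ.filter fun z : F => z ^ 3 = 1) := by
    ext z
    simp only [Finset.mem_filter, Finset.mem_univ, true_and, Finset.mem_insert]
    constructor
    · intro h
      rcases eq_or_ne z 0 with rfl | hz0
      · exact Or.inl rfl
      · refine Or.inr ?_
        have hmul : z * z ^ 3 = z * 1 := by
          rw [mul_one, ← pow_succ']
          exact h
        exact mul_left_cancel₀ hz0 hmul
    · rintro (rfl | h)
      · simp
      · rw [show z ^ 4 = z * z ^ 3 by ring, h, mul_one]
  have hcard : (univ.filter fun z : F => z ^ 4 = z).card = 4 := by
    rw [hset, Finset.card_insert_of_notMem (by simp), card_cube_roots hz]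
  rw [Finset.sum_ite, Finset.sum_const, Finset.sum_const_zero, add_zero]
  rw [hcard]
  push_cast
  ring

end Stmt5Aux

open Stmt5Aux

/-- Let `q = 2^(2m)` with `m ≥ 1`. Then the number of `β ∈ F_q` with
`Tr(β³) = 1` equals `2^(2m-1) + (-2)^m`, i.e. `q/2 + (-1)^m √q`. -/
theorem stmt5 (m : ℕ) (hm : 1 ≤ m) :
    (({β : GaloisField 2 (2 * m) |
        Algebra.trace (ZMod 2) (GaloisField 2 (2 * m)) (β ^ 3) = 1} :
          Set (GaloisField 2 (2 * m))).ncard : ℤ)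
      = 2 ^ (2 * m - 1) + (-2) ^ m := by
  classical
  have hne : 2 * m ≠ 0 := by omega
  letI : Fintype (GaloisField 2 (2 * m)) := Fintype.ofFinite _
  set F := GaloisField 2 (2 * m) with hF
  have hcard : Fintype.card F = 2 ^ (2 * m) := by
    rw [← Nat.card_eq_fintype_card]
    exact GaloisField.card 2 (2 * m) hne
  have hz : 3 ∣ Fintype.card F - 1 := by
    rw [hcard, pow_mul]
    have h := Nat.sub_dvd_pow_sub_pow (2 ^ 2) 1 m
    rw [one_pow] at h
    exact h
  have h1 : Algebra.trace (ZMod 2) F (1 : F) = 0 := by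
    have h := Algebra.trace_algebraMap (R := ZMod 2) (S := F) (1 : ZMod 2)
    rw [map_one] at h
    rw [h, GaloisField.finrank 2 hne, nsmul_eq_mul, mul_one,
      show ((2 * m : ℕ) : ZMod 2) = 0 from by
        rw [ZMod.natCast_eq_zero_iff]; exact ⟨m, rfl⟩]
  set S : ℤ := ∑ x : F, eps (Algebra.trace (ZMod 2) F (x ^ 3)) with hSdef
  have hsq : S ^ 2 = 4 * (Fintype.card F : ℤ) := S_sq hz h1
  have hmod : (3 : ℤ) ∣ S - 1 := S_mod hz
  -- deduce S = (-2)^(m+1)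
  have h4 : ((-2 : ℤ) ^ (m + 1)) ^ 2 = 4 * (Fintype.card F : ℤ) := by
    rw [hcard]
    push_cast
    calc ((-2 : ℤ) ^ (m + 1)) ^ 2 = ((-2 : ℤ) ^ 2) ^ (m + 1) := by
          rw [← pow_mul, ← pow_mul, mul_comm]
      _ = 4 ^ (m + 1) := by norm_num
      _ = 4 * 4 ^ m := by rw [pow_succ, mul_comm]
      _ = 4 * 2 ^ (2 * m) := by rw [show (4 : ℤ) = 2 ^ 2 by norm_num, ← pow_mul]
  have hfac : (S - (-2) ^ (m + 1)) * (S + (-2) ^ (m + 1)) = 0 := by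
    linear_combination hsq - h4
  have hSval : S = (-2) ^ (m + 1) := by
    rcases mul_eq_zero.mp hfac with h | h
    · linarith
    · exfalso
      have hS' : S = -(-2 : ℤ) ^ (m + 1) := by linarith
      have h3 : ((S - 1 : ℤ) : ZMod 3) = 0 := by
        rw [ZMod.intCast_zmod_eq_zero_iff_dvd]
        exact_mod_cast hmod
      rw [hS'] at h3
      have hcast : ((-(-2 : ℤ) ^ (m + 1) - 1 : ℤ) : ZMod 3)
          = -((-2 : ZMod 3)) ^ (m + 1) - 1 := by push_cast; ring
      rw [hcast, show ((-2 : ZMod 3)) = 1 from by decide, one_pow] at h3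
      exact absurd h3 (by decide)
  -- relate S to the count N
  set N := (univ.filter fun β : F => Algebra.trace (ZMod 2) F (β ^ 3) = 1).card with hN
  have hNset : ({β : F | Algebra.trace (ZMod 2) F (β ^ 3) = 1} : Set F).ncard = N := by
    rw [show {β : F | Algebra.trace (ZMod 2) F (β ^ 3) = 1}
        = ↑(univ.filter fun β : F => Algebra.trace (ZMod 2) F (β ^ 3) = 1) from by
      ext β; simp]
    rw [Set.ncard_coe_finset]
  have hSN : S = ((Fintype.card F : ℤ) - N) - N := by
    rw [hSdef, ← Finset.sum_filter_add_sum_filter_not univ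
      (fun β : F => Algebra.trace (ZMod 2) F (β ^ 3) = 1)]
    have hA : (∑ x ∈ univ.filter (fun β : F => Algebra.trace (ZMod 2) F (β ^ 3) = 1),
        eps (Algebra.trace (ZMod 2) F (x ^ 3))) = -(N : ℤ) := by
      have hcongr : ∀ x ∈ univ.filter (fun β : F => Algebra.trace (ZMod 2) F (β ^ 3) = 1),
          eps (Algebra.trace (ZMod 2) F (x ^ 3)) = -1 := fun x hx => by
        rw [(Finset.mem_filter.mp hx).2, eps_one]
      rw [Finset.sum_congr rfl hcongr, Finset.sum_const, hN]
      simp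
    have heps1 : ∀ t : ZMod 2, ¬ t = 1 → eps t = 1 := by decide
    have hB : (∑ x ∈ univ.filter (fun β : F => ¬ Algebra.trace (ZMod 2) F (β ^ 3) = 1),
        eps (Algebra.trace (ZMod 2) F (x ^ 3)))
        = ((Fintype.card F : ℤ) - N) := by
      have hcongr : ∀ x ∈ univ.filter (fun β : F => ¬ Algebra.trace (ZMod 2) F (β ^ 3) = 1),
          eps (Algebra.trace (ZMod 2) F (x ^ 3)) = 1 := fun x hx =>
        heps1 _ (Finset.mem_filter.mp hx).2
      rw [Finset.sum_congr rfl hcongr, Finset.sum_const, nsmul_eq_mul, mul_one]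
      have htot := Finset.card_filter_add_card_filter_not
        (s := (univ : Finset F)) (p := fun β : F => Algebra.trace (ZMod 2) F (β ^ 3) = 1)
      simp only [Finset.card_univ] at htot
      rw [hN]
      omega
    rw [hA, hB]
    ring
  rw [hNset]
  have hpow : (2 : ℤ) ^ (2 * m) = 2 * 2 ^ (2 * m - 1) := by
    rw [← pow_succ']
    congr 1
    omega
  have hpow2 : ((-2 : ℤ)) ^ (m + 1) = (-2) * (-2) ^ m := by rw [pow_succ']
  have hq : ((Fintype.card F : ℤ)) = 2 ^ (2 * m) := by exact_mod_cast hcard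
  rw [hSval, hq] at hSN
  have h2N : (2 : ℤ) * N = 2 * (2 ^ (2 * m - 1) + (-2) ^ m) := by
    rw [mul_add]
    rw [hpow2] at hSN
    linarith [hpow]
  exact mul_left_cancel₀ (by norm_num : (2:ℤ) ≠ 0) h2N
end
end

section
/- Let q ≥ 5 be a prime power not divisible by 3. For m ∈ {1,2}, let V_m be the number of β ∈ F_q such that the cubic polynomial t³ - 3βt² - 1 has exactly m roots in F_q. Then the number of points of the line ℓ_L that lie in exactly two osculating planes of the twisted cubic equals V₂ + 1, and the number of points of ℓ_L that lie in exactly one osculating plane equals V₁. -/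
/-- The osculating plane `π_osc(t)` of the twisted cubic, as a subset of `F_q⁴`:
for `t ∈ F_q` it is `{x | x₀ - 3t·x₁ + 3t²·x₂ - t³·x₃ = 0}`, and
`π_osc(∞)` is `{x | x₃ = 0}`. -/
def oscSet {F : Type*} [Field F] : Option F → Set (Fin 4 → F)
  | none => {x | x 3 = 0}
  | some t => {x | x 0 - 3 * t * x 1 + 3 * t ^ 2 * x 2 - t ^ 3 * x 3 = 0}

/-- The spanning vectors of the points of the line `ℓ_L`: `Q_∞ = (0,0,1,0)` and
`Q_β = (1,0,β,1)` for `β ∈ F_q`. -/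
def QL {F : Type*} [Field F] : Option F → (Fin 4 → F)
  | none => ![0, 0, 1, 0]
  | some b => ![1, 0, b, 1]

lemma smul_mem_oscSet {F : Type*} [Field F] (τ : Option F) (c : F) {v : Fin 4 → F}
    (hv : v ∈ oscSet τ) : c • v ∈ oscSet τ := by
  cases τ <;>
    simp only [oscSet, Set.mem_setOf_eq, Pi.smul_apply, smul_eq_mul] at *
  · rw [hv, mul_zero]
  · linear_combination c * hv

lemma span_subset_oscSet {F : Type*} [Field F] (v : Fin 4 → F) (τ : Option F) :
    (Submodule.span F {v} : Set (Fin 4 → F)) ⊆ oscSet τ ↔ v ∈ oscSet τ := by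
  constructor
  · intro h
    exact h (Submodule.mem_span_singleton_self v)
  · intro h x hx
    obtain ⟨c, rfl⟩ := Submodule.mem_span_singleton.mp hx
    exact smul_mem_oscSet τ c h

lemma oscSet_injective {F : Type*} [Field F] (h3 : (3 : F) ≠ 0) :
    Function.Injective (oscSet (F := F)) := by
  intro τ σ h
  match τ, σ with
  | none, none => rfl
  | none, some s =>
      exfalso
      have hs : (![s ^ 3, 0, 0, 1] : Fin 4 → F) ∈ oscSet (some s) := by
        simp [oscSet]
      rw [← h] at hs
      simp [oscSet] at hs
  | some t, none =>
      exfalso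
      have hs : (![t ^ 3, 0, 0, 1] : Fin 4 → F) ∈ oscSet (some t) := by
        simp [oscSet]
      rw [h] at hs
      simp [oscSet] at hs
  | some t, some s =>
      have h1 : (![3 * t, 1, 0, 0] : Fin 4 → F) ∈ oscSet (some t) := by
        simp [oscSet]
      rw [h] at h1
      simp only [oscSet, Set.mem_setOf_eq] at h1
      have h2 : (3 : F) * (t - s) = 0 := by
        simp at h1
        linear_combination h1
      rcases mul_eq_zero.mp h2 with h' | h'
      · exact absurd h' h3
      · exact congrArg some (sub_eq_zero.mp h')

lemma QL_span_injective {F : Type*} [Field F] :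
    Function.Injective (fun β : Option F => Submodule.span F {QL β}) := by
  intro β γ h
  have h' : Submodule.span F {QL β} = Submodule.span F {QL γ} := h
  have hmem : QL β ∈ Submodule.span F {QL γ} := by
    rw [← h']; exact Submodule.mem_span_singleton_self _
  obtain ⟨c, hc⟩ := Submodule.mem_span_singleton.mp hmem
  match β, γ with
  | none, none => rfl
  | none, some b =>
      exfalso
      have h0 := congrFun hc 0
      have h2 := congrFun hc 2
      simp [QL] at h0 h2
      rw [h0] at h2
      simp at h2
  | some b, none =>
      exfalso
      have h0 := congrFun hc 0
      simp [QL] at h0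
  | some b, some b' =>
      have h0 := congrFun hc 0
      have h2 := congrFun hc 2
      simp [QL] at h0 h2
      rw [h0, one_mul] at h2
      rw [h2]

/-- Let `q ≥ 5` be a prime power not divisible by `3`. For `m ∈ {1,2}`,
let `V m` be the number of `β ∈ F_q` such that `t³ - 3βt² - 1` has exactly `m` roots in
`F_q`. Then the number of points of the line `ℓ_L` lying in exactly two osculating planes
of the twisted cubic equals `V 2 + 1`, and the number of points of `ℓ_L` lying in exactly
one osculating plane equals `V 1`. -/
theorem stmt7 (q : ℕ) (hq5 : 5 ≤ q) (h3 : ¬ (3 ∣ q))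
    (F : Type*) [Field F] [Fintype F] (hcard : Fintype.card F = q) :
    let linePts : Set (Submodule F (Fin 4 → F)) :=
      {p | ∃ β : Option F, p = Submodule.span F {QL β}}
    let numOsc : Submodule F (Fin 4 → F) → ℕ := fun p =>
      Set.ncard {π : Set (Fin 4 → F) | (∃ τ : Option F, π = oscSet τ) ∧ (p : Set (Fin 4 → F)) ⊆ π}
    let V : ℕ → ℕ := fun m =>
      Set.ncard {β : F | ({t : F | t ^ 3 - 3 * β * t ^ 2 - 1 = 0} : Set F).ncard = m}
    Set.ncard {p ∈ linePts | numOsc p = 2} = V 2 + 1 ∧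
    Set.ncard {p ∈ linePts | numOsc p = 1} = V 1 := by
  intro linePts numOsc V
  -- 3 ≠ 0 in F
  have h3F : (3 : F) ≠ 0 := by
    intro h0
    have hdvd : ringChar F ∣ 3 := by
      have := (CharP.cast_eq_zero_iff F (ringChar F) 3).mpr
      exact (CharP.cast_eq_zero_iff F (ringChar F) 3).mp h0
    have hprime : (ringChar F).Prime := CharP.char_is_prime F (ringChar F)
    have hchar : ringChar F = 3 :=
      (Nat.prime_dvd_prime_iff_eq hprime Nat.prime_three).mp hdvd
    obtain ⟨n, hp, hc⟩ := FiniteField.card F (ringChar F)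
    apply h3
    rw [← hcard, hc, hchar]
    exact dvd_pow_self 3 n.pos.ne'
  set e : Option F → Submodule F (Fin 4 → F) :=
    fun β => Submodule.span F {QL β} with he
  have einj : Function.Injective e := QL_span_injective
  -- the number of osculating planes through each point of the line
  have hNone : numOsc (e none) = 2 := by
    have hset : {π : Set (Fin 4 → F) | (∃ τ : Option F, π = oscSet τ) ∧
        ((e none : Set (Fin 4 → F)) ⊆ π)} = oscSet '' {τ : Option F | QL none ∈ oscSet τ} := by
      ext π
      constructor
      · rintro ⟨⟨τ, rfl⟩, hsub⟩
        exact ⟨τ, (span_subset_oscSet _ _).mp hsub, rfl⟩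
      · rintro ⟨τ, hτ, rfl⟩
        exact ⟨⟨τ, rfl⟩, (span_subset_oscSet _ _).mpr hτ⟩
    have hτset : {τ : Option F | QL none ∈ oscSet τ} = {none, some 0} := by
      ext τ
      cases τ with
      | none => simp [oscSet, QL]
      | some t =>
          simp only [oscSet, QL, Set.mem_setOf_eq, Set.mem_insert_iff,
            Set.mem_singleton_iff]
          constructor
          · intro h
            simp at h
            rcases h with h | h
            · exact absurd h h3F
            · right; exact congrArg some h
          · intro h
            rcases h with h | h
            · exact absurd h (by simp)
            · rw [Option.some_inj.mp h]; simp
    rw [show numOsc (e none) = Set.ncard {π : Set (Fin 4 → F) |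
        (∃ τ : Option F, π = oscSet τ) ∧ ((e none : Set (Fin 4 → F)) ⊆ π)} from rfl,
      hset, Set.ncard_image_of_injective _ (oscSet_injective h3F), hτset]
    rw [Set.ncard_pair (by simp)]
  have hSome : ∀ b : F, numOsc (e (some b)) =
      Set.ncard {t : F | t ^ 3 - 3 * b * t ^ 2 - 1 = 0} := by
    intro b
    have hset : {π : Set (Fin 4 → F) | (∃ τ : Option F, π = oscSet τ) ∧
        ((e (some b) : Set (Fin 4 → F)) ⊆ π)} =
        oscSet '' {τ : Option F | QL (some b) ∈ oscSet τ} := by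
      ext π
      constructor
      · rintro ⟨⟨τ, rfl⟩, hsub⟩
        exact ⟨τ, (span_subset_oscSet _ _).mp hsub, rfl⟩
      · rintro ⟨τ, hτ, rfl⟩
        exact ⟨⟨τ, rfl⟩, (span_subset_oscSet _ _).mpr hτ⟩
    have hτset : {τ : Option F | QL (some b) ∈ oscSet τ} =
        some '' {t : F | t ^ 3 - 3 * b * t ^ 2 - 1 = 0} := by
      ext τ
      cases τ with
      | none =>
          simp [oscSet, QL]
      | some t =>
          simp only [oscSet, QL, Set.mem_setOf_eq, Set.mem_image,
            Option.some_inj]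
          constructor
          · intro h
            refine ⟨t, ?_, rfl⟩
            simp at h
            linear_combination -h
          · rintro ⟨t', ht', rfl⟩
            have ht'' : t' ^ 3 - 3 * b * t' ^ 2 - 1 = 0 := ht'
            show (![1, 0, b, 1] : Fin 4 → F) 0 - 3 * t' * ![1, 0, b, 1] 1
              + 3 * t' ^ 2 * ![1, 0, b, 1] 2 - t' ^ 3 * ![1, 0, b, 1] 3 = 0
            simp only [Matrix.cons_val_zero, Matrix.cons_val_one, Matrix.head_cons]
            rw [show (![1, 0, b, 1] : Fin 4 → F) 2 = b from rfl, show (![1, 0, b, 1] : Fin 4 → F) 3 = 1 from rfl]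
            norm_num
            linear_combination -ht''
    rw [show numOsc (e (some b)) = Set.ncard {π : Set (Fin 4 → F) |
        (∃ τ : Option F, π = oscSet τ) ∧ ((e (some b) : Set (Fin 4 → F)) ⊆ π)} from rfl,
      hset, Set.ncard_image_of_injective _ (oscSet_injective h3F), hτset,
      Set.ncard_image_of_injective _ (Option.some_injective F)]
  -- describe the level sets of numOsc on the line
  have hlevel : ∀ m : ℕ, {p ∈ linePts | numOsc p = m} = e '' {β : Option F | numOsc (e β) = m} := by
    intro m
    ext p
    constructor
    · rintro ⟨⟨β, rfl⟩, hm⟩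
      exact ⟨β, hm, rfl⟩
    · rintro ⟨β, hm, rfl⟩
      exact ⟨⟨β, rfl⟩, hm⟩
  constructor
  · rw [hlevel 2, Set.ncard_image_of_injective _ einj]
    have : {β : Option F | numOsc (e β) = 2} =
        insert none (some '' {b : F | ({t : F | t ^ 3 - 3 * b * t ^ 2 - 1 = 0} : Set F).ncard = 2}) := by
      ext β
      cases β with
      | none => simp [hNone]
      | some b => simp [hSome b]
    rw [this, Set.ncard_insert_of_notMem (by simp),
      Set.ncard_image_of_injective _ (Option.some_injective F)]
  · rw [hlevel 1, Set.ncard_image_of_injective _ einj]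
    have : {β : Option F | numOsc (e β) = 1} =
        some '' {b : F | ({t : F | t ^ 3 - 3 * b * t ^ 2 - 1 = 0} : Set F).ncard = 1} := by
      ext β
      cases β with
      | none => simp [hNone]
      | some b => simp [hSome b]
    rw [this, Set.ncard_image_of_injective _ (Option.some_injective F)]
end

section
/- Let q ≥ 5 be an odd prime power not divisible by 3. The number of osculating planes of the twisted cubic (among the q+1 planes π_osc(t), t ∈ F_q ∪ {∞}) that contain the point spanned by (1,0,1,0) equals 1 if q ≡ -1 (mod 3) and equals 3 if q ≡ 1 (mod 3). -/
section aux
variable {F : Type*} [Field F]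

lemma oscSet_inj (h3 : (3:F) ≠ 0) : Function.Injective (oscSet (F := F)) := by
  intro a b hab
  match a, b with
  | none, none => rfl
  | none, some t =>
      exfalso
      have h1 : (![t^3,0,0,1] : Fin 4 → F) ∈ oscSet (some t) := by simp [oscSet]
      rw [← hab] at h1
      simp [oscSet] at h1
  | some t, none =>
      exfalso
      have h1 : (![t^3,0,0,1] : Fin 4 → F) ∈ oscSet (some t) := by simp [oscSet]
      rw [hab] at h1
      simp [oscSet] at h1
  | some t, some t' =>
      have h1 : (![3*t,1,0,0] : Fin 4 → F) ∈ oscSet (some t) := by simp [oscSet]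
      rw [hab] at h1
      simp [oscSet] at h1
      have h2 : 3 * (t - t') = 0 := by linear_combination h1
      rcases mul_eq_zero.1 h2 with h | h
      · exact absurd h h3
      · exact congrArg some (sub_eq_zero.1 h)

lemma span_subset_none :
    ((Submodule.span F {![1, 0, 1, 0]} : Submodule F (Fin 4 → F)) : Set (Fin 4 → F)) ⊆
      oscSet none := by
  intro x hx
  rw [SetLike.mem_coe, Submodule.mem_span_singleton] at hx
  obtain ⟨c, rfl⟩ := hx
  simp [oscSet]

lemma span_subset_some (t : F) :
    (((Submodule.span F {![1, 0, 1, 0]} : Submodule F (Fin 4 → F)) : Set (Fin 4 → F)) ⊆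
      oscSet (some t)) ↔ 3 * t ^ 2 + 1 = 0 := by
  constructor
  · intro h
    have hv : (![1,0,1,0] : Fin 4 → F) ∈ oscSet (some t) :=
      h (Submodule.mem_span_singleton_self _)
    simp [oscSet] at hv
    linear_combination hv
  · intro h x hx
    rw [SetLike.mem_coe, Submodule.mem_span_singleton] at hx
    obtain ⟨c, rfl⟩ := hx
    simp [oscSet]
    linear_combination c * h

end aux

/-- Let `q ≥ 5` be an odd prime power not divisible by `3`. The number of
osculating planes of the twisted cubic (among the `q+1` planes `π_osc(t)`,
`t ∈ F_q ∪ {∞}`) containing the point spanned by `(1,0,1,0)` equals `1` if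
`q ≡ -1 (mod 3)` and equals `3` if `q ≡ 1 (mod 3)`. -/
theorem stmt8 (q : ℕ) (hq5 : 5 ≤ q) (hodd : Odd q) (h3 : ¬ (3 ∣ q))
    (F : Type*) [Field F] [Fintype F] (hcard : Fintype.card F = q) :
    let n : ℕ := Set.ncard {π : Set (Fin 4 → F) | (∃ τ : Option F, π = oscSet τ) ∧
      ((Submodule.span F {![1, 0, 1, 0]} : Submodule F (Fin 4 → F)) : Set (Fin 4 → F)) ⊆ π}
    (q % 3 = 2 → n = 1) ∧ (q % 3 = 1 → n = 3) := by
  intro n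
  have : DecidableEq F := Classical.decEq F
  -- characteristic facts
  have hqF : ((q : ℕ) : F) = 0 := by
    rw [← hcard]; exact FiniteField.cast_card_eq_zero F
  set p := ringChar F with hp
  have hcp : CharP F p := ringChar.charP F
  have hpq : p ∣ q := (CharP.cast_eq_zero_iff F p q).1 hqF
  have hpne1 : p ≠ 1 := CharP.char_ne_one F p
  have h3F : (3 : F) ≠ 0 := by
    intro h
    have hp3 : p ∣ 3 := (CharP.cast_eq_zero_iff F p 3).1 (by exact_mod_cast h)
    rcases (Nat.prime_three).eq_one_or_self_of_dvd p hp3 with h1 | h1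
    · exact hpne1 h1
    · exact h3 (h1 ▸ hpq)
  have h2F : (2 : F) ≠ 0 := by
    intro h
    have hp2 : p ∣ 2 := (CharP.cast_eq_zero_iff F p 2).1 (by exact_mod_cast h)
    rcases (Nat.prime_two).eq_one_or_self_of_dvd p hp2 with h1 | h1
    · exact hpne1 h1
    · rw [h1] at hpq
      rcases hodd with ⟨k, hk⟩
      omega
  -- the counted set as an image
  have himg : {π : Set (Fin 4 → F) | (∃ τ : Option F, π = oscSet τ) ∧
      ((Submodule.span F {![1, 0, 1, 0]} : Submodule F (Fin 4 → F)) : Set (Fin 4 → F)) ⊆ π}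
      = oscSet '' {τ : Option F |
        ((Submodule.span F {![1, 0, 1, 0]} : Submodule F (Fin 4 → F)) : Set (Fin 4 → F)) ⊆
          oscSet τ} := by
    ext π
    constructor
    · rintro ⟨⟨τ, rfl⟩, hs⟩
      exact ⟨τ, hs, rfl⟩
    · rintro ⟨τ, hτ, rfl⟩
      exact ⟨⟨τ, rfl⟩, hτ⟩
  have hT : {τ : Option F |
        ((Submodule.span F {![1, 0, 1, 0]} : Submodule F (Fin 4 → F)) : Set (Fin 4 → F)) ⊆
          oscSet τ} = insert none (some '' {t : F | 3 * t ^ 2 + 1 = 0}) := by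
    ext τ
    match τ with
    | none => simp [span_subset_none]
    | some t => simp [span_subset_some]
  have hn : n = Set.ncard (insert none (some '' {t : F | 3 * t ^ 2 + 1 = 0})) := by
    show Set.ncard _ = _
    rw [himg, hT, Set.ncard_image_of_injective _ (oscSet_inj h3F)]
  have hunits : Fintype.card Fˣ = q - 1 := by rw [Fintype.card_units, hcard]
  constructor
  · -- q % 3 = 2 : no roots
    intro hq3
    have hroots : {t : F | 3 * t ^ 2 + 1 = 0} = ∅ := by
      ext t
      simp only [Set.mem_setOf_eq, Set.mem_empty_iff_false, iff_false]
      intro ht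
      -- build a cube root of unity
      set ω : F := (3 * t - 1) / 2 with hω
      have hsum : ω ^ 2 + ω + 1 = 0 := by
        rw [hω]
        field_simp
        linear_combination 3 * ht
      have hω1 : ω ≠ 1 := by
        intro h
        rw [h] at hsum
        apply h3F
        linear_combination hsum
      have hω0 : ω ≠ 0 := by
        intro h
        rw [h] at hsum
        simp at hsum
      have hcube : ω ^ 3 = 1 := by linear_combination (ω - 1) * hsum
      -- as a unit
      set u : Fˣ := Units.mk0 ω hω0 with hu
      have hu3 : u ^ 3 = 1 := by
        ext
        push_cast [hu]
        exact hcube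
      have hune : u ≠ 1 := by
        intro h
        apply hω1
        have : ((u : F)) = ((1 : Fˣ) : F) := by rw [h]
        simpa [hu] using this
      have hord : orderOf u = 3 := by
        have hdvd : orderOf u ∣ 3 := orderOf_dvd_of_pow_eq_one hu3
        rcases (Nat.prime_three).eq_one_or_self_of_dvd _ hdvd with h1 | h1
        · exact absurd (orderOf_eq_one_iff.1 h1) hune
        · exact h1
      have : (3 : ℕ) ∣ q - 1 := by
        rw [← hord, ← hunits]
        exact orderOf_dvd_card
      omega
    rw [hn, hroots]
    simp
  · -- q % 3 = 1 : two roots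
    intro hq3
    have hd : (3 : ℕ) ∣ Fintype.card Fˣ := by rw [hunits]; omega
    have : Fact (Nat.Prime 3) := ⟨Nat.prime_three⟩
    obtain ⟨u, hu⟩ := exists_prime_orderOf_dvd_card (G := Fˣ) 3 hd
    set ω : F := (u : F) with hω
    have hcube : ω ^ 3 = 1 := by
      have : u ^ 3 = 1 := by rw [← hu]; exact pow_orderOf_eq_one u
      have := congrArg (Units.val) this
      push_cast at this
      exact this
    have hω1 : ω ≠ 1 := by
      intro h
      have : u = 1 := by ext; simpa [hω] using h
      rw [this] at hu
      simp at hu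
    have hsum : ω ^ 2 + ω + 1 = 0 := by
      have h1 : (ω - 1) * (ω ^ 2 + ω + 1) = 0 := by linear_combination hcube
      rcases mul_eq_zero.1 h1 with h | h
      · exact absurd (sub_eq_zero.1 h) hω1
      · exact h
    set t : F := (2 * ω + 1) / 3 with htdef
    have ht : 3 * t ^ 2 + 1 = 0 := by
      field_simp [htdef]
      linear_combination 12 * (3:F)⁻¹ ^ 2 * hsum - (3 * (3:F)⁻¹ + 1) * inv_mul_cancel₀ h3F
    have ht0 : t ≠ 0 := by
      intro h
      rw [h] at ht
      simp at ht
    have htne : t ≠ -t := by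
      intro h
      apply ht0
      have h2 : 2 * t = 0 := by linear_combination h
      rcases mul_eq_zero.1 h2 with h | h
      · exact absurd h h2F
      · exact h
    have hroots : {s : F | 3 * s ^ 2 + 1 = 0} = {t, -t} := by
      ext s
      simp only [Set.mem_setOf_eq, Set.mem_insert_iff, Set.mem_singleton_iff]
      constructor
      · intro hs
        have : 3 * ((s - t) * (s + t)) = 0 := by linear_combination hs - ht
        rcases mul_eq_zero.1 this with h | h
        · exact absurd h h3F
        · rcases mul_eq_zero.1 h with h | h
          · exact Or.inl (sub_eq_zero.1 h)
          · exact Or.inr (eq_neg_of_add_eq_zero_left h)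
      · rintro (rfl | rfl)
        · exact ht
        · linear_combination ht
    rw [hn, hroots]
    have himg2 : some '' ({t, -t} : Set F) = {some t, some (-t)} := by
      simp [Set.image_insert_eq]
    rw [himg2]
    rw [Set.ncard_insert_of_notMem (by simp) (by
      exact (Set.Finite.insert _ (Set.finite_singleton _)))]
    rw [Set.ncard_pair (by simpa using htne)]
end

section
/- Let q ≥ 5 be a prime power and let μ ∈ F_q with μ ≠ 0 and μ ≠ 1. Then ℓ_μ ∩ T_∞ = {0}, and for every t ∈ F_q the line ℓ_μ meets the tangent line T_t nontrivially (i.e. ℓ_μ ∩ T_t ≠ {0}) if and only if t⁴ - (3μ - 1)t² + μ = 0. -/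
/-- Let `q ≥ 5` be a prime power and `μ ∈ F_q` with `μ ≠ 0`, `μ ≠ 1`.
Then `ℓ_μ ∩ T_∞ = {0}`, and for every `t ∈ F_q` the line `ℓ_μ` meets the tangent line
`T_t` nontrivially if and only if `t⁴ - (3μ - 1)t² + μ = 0`. -/
theorem stmt9 (q : ℕ) (hq5 : 5 ≤ q)
    (F : Type*) [Field F] [Fintype F] (hcard : Fintype.card F = q)
    (μ : F) (hμ0 : μ ≠ 0) (hμ1 : μ ≠ 1) :
    let lmu : Submodule F (Fin 4 → F) := Submodule.span F {![0, μ, 0, 1], ![1, 0, 1, 0]}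
    let T : F → Submodule F (Fin 4 → F) := fun t =>
      Submodule.span F {![t ^ 3, t ^ 2, t, 1], ![3 * t ^ 2, 2 * t, 1, 0]}
    let Tinf : Submodule F (Fin 4 → F) := Submodule.span F {![1, 0, 0, 0], ![0, 1, 0, 0]}
    lmu ⊓ Tinf = ⊥ ∧
    ∀ t : F, (lmu ⊓ T t ≠ ⊥ ↔ t ^ 4 - (3 * μ - 1) * t ^ 2 + μ = 0) := by
  intro lmu T Tinf
  constructor
  · rw [eq_bot_iff]
    intro x hx
    obtain ⟨hx1, hx2⟩ := Submodule.mem_inf.mp hx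
    obtain ⟨a, b, hab⟩ := Submodule.mem_span_pair.mp hx1
    obtain ⟨c, d, hcd⟩ := Submodule.mem_span_pair.mp hx2
    have h := hab.trans hcd.symm
    have h2 := congrFun h 2
    have h3 := congrFun h 3
    simp [Pi.add_apply, Pi.smul_apply, smul_eq_mul] at h2 h3
    have hx0 : x = 0 := by
      rw [← hab, h2, h3]
      simp
    simp [hx0]
  · intro t
    constructor
    · intro hne
      obtain ⟨x, hx, hx0⟩ := Submodule.ne_bot_iff _ |>.mp hne
      obtain ⟨hx1, hx2⟩ := Submodule.mem_inf.mp hx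
      obtain ⟨a, b, hab⟩ := Submodule.mem_span_pair.mp hx1
      obtain ⟨c, d, hcd⟩ := Submodule.mem_span_pair.mp hx2
      have h := hab.trans hcd.symm
      have h0 := congrFun h 0
      have h1 := congrFun h 1
      have h2 := congrFun h 2
      have h3 := congrFun h 3
      simp [Pi.add_apply, Pi.smul_apply, smul_eq_mul] at h0 h1 h2 h3
      have E0 : b * (1 - 3 * t ^ 2) + 2 * a * t ^ 3 = 0 := by
        linear_combination h0 - 3 * t ^ 2 * h2 + 2 * t ^ 3 * h3
      have E1 : a * (μ + t ^ 2) - 2 * b * t = 0 := by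
        linear_combination h1 - 2 * t * h2 + t ^ 2 * h3
      have hab0 : a ≠ 0 ∨ b ≠ 0 := by
        by_contra hcon
        push_neg at hcon
        apply hx0
        rw [← hab, hcon.1, hcon.2]
        simp
      rcases hab0 with ha | hb
      · have key : (t ^ 4 - (3 * μ - 1) * t ^ 2 + μ) * a = 0 := by
          linear_combination 2 * t * E0 + (1 - 3 * t ^ 2) * E1
        exact (mul_eq_zero.mp key).resolve_right ha
      · have key : (t ^ 4 - (3 * μ - 1) * t ^ 2 + μ) * b = 0 := by
          linear_combination (μ + t ^ 2) * E0 - 2 * t ^ 3 * E1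
        exact (mul_eq_zero.mp key).resolve_right hb
    · intro hD
      rw [Submodule.ne_bot_iff]
      by_cases hp : 3 * t ^ 2 - 1 = 0 ∧ 2 * t ^ 3 = 0
      · -- use (a, b) = (2t, μ + t²)
        obtain ⟨hp1, hp2⟩ := hp
        have hnz : ¬ (2 * t = 0 ∧ μ + t ^ 2 = 0) := by
          rintro ⟨hq1, hq2⟩
          have ht2 : t ^ 2 = 1 := by linear_combination hp1 - t * hq1
          have h2z : (2 : F) = 0 := by
            have ht0 : t ≠ 0 := by
              intro h; rw [h] at ht2; simp at ht2
            rcases mul_eq_zero.mp hq1 with h | h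
            · exact h
            · exact absurd h ht0
          exact hμ1 (by linear_combination hq2 - ht2 - h2z)
        refine ⟨(2 * t) • ![0, μ, 0, 1] + (μ + t ^ 2) • ![1, 0, 1, 0], ?_, ?_⟩
        · apply Submodule.mem_inf.mpr
          refine ⟨Submodule.mem_span_pair.mpr ⟨2 * t, μ + t ^ 2, rfl⟩, ?_⟩
          apply Submodule.mem_span_pair.mpr
          refine ⟨2 * t, (μ + t ^ 2) - (2 * t) * t, ?_⟩
          funext i
          fin_cases i <;> (simp; try ring)
          linear_combination -hD
        · intro hzero
          have g3 := congrFun hzero 3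
          have g0 := congrFun hzero 0
          simp only [Pi.add_apply, Pi.smul_apply, smul_eq_mul, Matrix.cons_val_zero,
            Matrix.cons_val_one, Matrix.head_cons, Matrix.cons_val_two, Matrix.tail_cons,
            Matrix.cons_val_three, Pi.zero_apply, mul_zero, mul_one, add_zero, zero_add]
            at g3 g0
          exact hnz ⟨g3, g0⟩
      · -- use (a, b) = (3t² - 1, 2t³)
        refine ⟨(3 * t ^ 2 - 1) • ![0, μ, 0, 1] + (2 * t ^ 3) • ![1, 0, 1, 0], ?_, ?_⟩
        · apply Submodule.mem_inf.mpr
          refine ⟨Submodule.mem_span_pair.mpr ⟨3 * t ^ 2 - 1, 2 * t ^ 3, rfl⟩, ?_⟩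
          apply Submodule.mem_span_pair.mpr
          refine ⟨3 * t ^ 2 - 1, 2 * t ^ 3 - (3 * t ^ 2 - 1) * t, ?_⟩
          funext i
          fin_cases i <;> (simp; try ring)
          linear_combination hD
        · intro hzero
          have g3 := congrFun hzero 3
          have g0 := congrFun hzero 0
          simp only [Pi.add_apply, Pi.smul_apply, smul_eq_mul, Matrix.cons_val_zero,
            Matrix.cons_val_one, Matrix.head_cons, Matrix.cons_val_two, Matrix.tail_cons,
            Matrix.cons_val_three, Pi.zero_apply, mul_zero, mul_one, add_zero, zero_add]
            at g3 g0
          exact hp ⟨g3, g0⟩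
end

section
/- Let q ≥ 8 be an even prime power and μ ∈ F_q^* with μ ≠ 1. Then the number of c ∈ F_q^* such that the cubic t³ + ct² + t + μc has exactly one root in F_q equals the number of c ∈ F_q^* such that Tr( (1 + μc⁴)/(c²(μ+1)²) + μ/(μ+1) ) = 1. -/
open Polynomial



section AS

variable (K : Type*) [Field K] [Finite K] [CharP K 2] [Algebra (ZMod 2) K]

noncomputable def frobAlg : K ≃ₐ[ZMod 2] K :=
  AlgEquiv.ofRingEquiv (f := frobeniusEquiv K 2) (fun x => by
    rw [frobeniusEquiv_def, ← map_pow]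
    congr 1
    exact ZMod.pow_card x)

lemma tr_sq (x : K) : Algebra.trace (ZMod 2) K (x ^ 2) = Algebra.trace (ZMod 2) K x := by
  have h := Algebra.trace_eq_of_algEquiv (frobAlg K) x
  have h2 : frobAlg K x = x ^ 2 := rfl
  rwa [h2] at h

variable {K}

lemma as_iff (w : K) : (∃ y : K, y ^ 2 + y = w) ↔ Algebra.trace (ZMod 2) K w = 0 := by
  classical
  haveI : Module.Finite (ZMod 2) K := .of_finite
  have h2 : (2 : K) = 0 := CharTwo.two_eq_zero
  set ψ : K →ₗ[ZMod 2] K :=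
    AddMonoidHom.toZModLinearMap 2
      { toFun := fun y => y ^ 2 + y
        map_zero' := by simp
        map_add' := fun x y => by linear_combination x * y * h2 } with hψ
  have hψa : ∀ y : K, ψ y = y ^ 2 + y := fun y => rfl
  set T : K →ₗ[ZMod 2] ZMod 2 := Algebra.trace (ZMod 2) K with hT
  -- kernel of ψ
  have hker : LinearMap.ker ψ = Submodule.span (ZMod 2) {(1 : K)} := by
    ext y
    simp only [LinearMap.mem_ker, hψa, Submodule.mem_span_singleton]
    constructor
    · intro hy
      have : y * (y + 1) = 0 := by linear_combination hy
      rcases mul_eq_zero.mp this with h | h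
      · exact ⟨0, by simp [h]⟩
      · exact ⟨1, by rw [one_smul]; linear_combination -h + h2⟩
    · rintro ⟨a, rfl⟩
      rcases (by decide : ∀ a : ZMod 2, a = 0 ∨ a = 1) a with rfl | rfl <;> simp <;> linear_combination h2
  have hk1 : Module.finrank (ZMod 2) (LinearMap.ker ψ) = 1 := by
    rw [hker]; exact finrank_span_singleton one_ne_zero
  -- trace surjective
  have hT1 : ∃ b : K, T b ≠ 0 := by
    have hnd := Algebra.trace_ne_zero (ZMod 2) K
    by_contra hf
    push_neg at hf
    exact hnd (LinearMap.ext fun y => by simpa using hf y)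
  have hTsurj : Function.Surjective T := by
    obtain ⟨b, hb⟩ := hT1
    intro z
    fin_cases z
    · exact ⟨0, by simp; rfl⟩
    · refine ⟨b, ?_⟩
      have h01 : ∀ z : ZMod 2, z ≠ 0 → z = 1 := by decide
      exact h01 _ hb
  have hrT : Module.finrank (ZMod 2) (LinearMap.range T) = 1 := by
    rw [LinearMap.range_eq_top.mpr hTsurj]
    simpa using Module.finrank_self (ZMod 2)
  -- range ψ ≤ ker T
  have hle : LinearMap.range ψ ≤ LinearMap.ker T := by
    rintro _ ⟨y, rfl⟩
    have := tr_sq K y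
    simp only [LinearMap.mem_ker, hψa, map_add, hT]
    rw [this]
    exact CharTwo.add_self_eq_zero _
  have e1 := LinearMap.finrank_range_add_finrank_ker ψ
  have e2 := LinearMap.finrank_range_add_finrank_ker T
  have heq : LinearMap.range ψ = LinearMap.ker T := by
    refine Submodule.eq_of_le_of_finrank_le hle ?_
    omega
  constructor
  · rintro ⟨y, hy⟩
    have : w ∈ LinearMap.range ψ := ⟨y, by rw [hψa, hy]⟩
    rw [heq] at this
    exact this
  · intro hw
    have : w ∈ LinearMap.ker T := hw
    rw [← heq] at this
    obtain ⟨y, hy⟩ := this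
    exact ⟨y, by rw [← hψa, hy]⟩

end AS

section AS
variable {K : Type*} [Field K] [Finite K] [CharP K 2] [Algebra (ZMod 2) K]

lemma quad_root_iff (r s : K) (hr : r ≠ 0) :
    (∃ x : K, x ^ 2 + r * x + s = 0) ↔ Algebra.trace (ZMod 2) K (s / r ^ 2) = 0 := by
  have h2 : (2 : K) = 0 := CharTwo.two_eq_zero
  rw [← as_iff]
  constructor
  · rintro ⟨x, hx⟩
    refine ⟨x / r, ?_⟩
    field_simp
    linear_combination hx - s * h2
  · rintro ⟨y, hy⟩
    refine ⟨r * y, ?_⟩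
    have : r ^ 2 * (y ^ 2 + y) = r ^ 2 * (s / r ^ 2) := by rw [hy]
    rw [mul_div_cancel₀ _ (pow_ne_zero 2 hr)] at this
    linear_combination this + s * h2

lemma sq_exists (a : K) : ∃ u : K, u ^ 2 = a := by
  have h := (frobeniusEquiv K 2).apply_symm_apply a
  exact ⟨(frobeniusEquiv K 2).symm a, by rwa [frobeniusEquiv_def] at h⟩

lemma trace_xi_eq (a b r : K) (hb : b ≠ 0) (hroot : r ^ 3 + a * r + b = 0) :
    Algebra.trace (ZMod 2) K (a ^ 3 / b ^ 2 + 1)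
      = Algebra.trace (ZMod 2) K ((r ^ 2 + a) / r ^ 2) := by
  have h2 : (2 : K) = 0 := CharTwo.two_eq_zero
  have hr : r ≠ 0 := by
    rintro rfl
    apply hb
    linear_combination hroot
  obtain ⟨u, hu⟩ := sq_exists a
  have hru : r + u ≠ 0 := by
    intro h
    apply hb
    have hra : r ^ 2 = a := by rw [← hu]; linear_combination (r - u) * h
    linear_combination hroot - r * hra - a * r * h2
  have hbr : b ^ 2 = r ^ 2 * (r ^ 2 + a) ^ 2 := by
    linear_combination (b - r ^ 3 - a * r) * hroot
  have hs : r ^ 2 + a ≠ 0 := by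
    intro h
    apply hb
    linear_combination hroot - r * h
  set z : K := a / (r + u) ^ 2 with hz
  have key : a ^ 3 / b ^ 2 + 1 = (r ^ 2 + a) / r ^ 2 + (z ^ 2 + z) := by
    subst hu
    rw [hz, hbr]
    field_simp
    linear_combination (-(u ^ 2 * r ^ 8) - 3 * u ^ 3 * r ^ 7 - 6 * u ^ 4 * r ^ 6
      - 8 * u ^ 5 * r ^ 5 - 9 * u ^ 6 * r ^ 4 - 5 * u ^ 7 * r ^ 3 - 2 * u ^ 8 * r ^ 2) * h2
  have htz : Algebra.trace (ZMod 2) K (z ^ 2 + z) = 0 := (as_iff _).mp ⟨z, rfl⟩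
  rw [key, map_add, htz, add_zero]
end AS

section AS
variable {K : Type*} [Field K] [Finite K] [CharP K 2] [Algebra (ZMod 2) K]

lemma zmod2_cases : ∀ z : ZMod 2, z ≠ 0 → z = 1 := by decide
end AS

section Cubic
variable {F : Type*} [Field F] [Finite F] [CharP F 2] [Algebra (ZMod 2) F]

lemma cubic_count (a b : F) (hb : b ≠ 0) :
    ({x : F | x ^ 3 + a * x + b = 0}).ncard = 1 ↔
      Algebra.trace (ZMod 2) F (a ^ 3 / b ^ 2 + 1) = 1 := by
  have h2 : (2 : F) = 0 := CharTwo.two_eq_zero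
  by_cases hex : ∃ r : F, r ^ 3 + a * r + b = 0
  · obtain ⟨r, hroot⟩ := hex
    have hr : r ≠ 0 := by
      rintro rfl; apply hb; linear_combination hroot
    have hs : r ^ 2 + a ≠ 0 := by
      intro h; apply hb; linear_combination hroot - r * h
    have hfac : ∀ x : F, x ^ 3 + a * x + b = (x + r) * (x ^ 2 + r * x + (r ^ 2 + a)) := by
      intro x
      linear_combination hroot - (r ^ 3 + a * r + r * x ^ 2 + r ^ 2 * x) * h2
    have htx := trace_xi_eq a b r hb hroot
    by_cases hq : ∃ x : F, x ^ 2 + r * x + (r ^ 2 + a) = 0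
    · obtain ⟨x0, hx0⟩ := hq
      have hx0r : x0 ≠ r := by
        intro heq; apply hs; rw [heq] at hx0; linear_combination hx0 - r ^ 2 * h2
      have hx00 : x0 ≠ 0 := by
        rintro rfl; apply hs; linear_combination hx0
      have hSeq : {x : F | x ^ 3 + a * x + b = 0} = {r, x0, x0 + r} := by
        ext x
        simp only [Set.mem_setOf_eq, Set.mem_insert_iff, Set.mem_singleton_iff]
        constructor
        · intro hx
          rw [hfac x] at hx
          rcases mul_eq_zero.mp hx with h | h
          · left; linear_combination h - r * h2
          · right
            have : (x - x0) * (x + x0 + r) = 0 := by linear_combination h - hx0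
            rcases mul_eq_zero.mp this with h' | h'
            · left; linear_combination h'
            · right; linear_combination h' - (x0 + r) * h2
        · rintro (h | h | h)
          · rw [h]; exact hroot
          · rw [h, hfac x0, hx0, mul_zero]
          · rw [h, hfac (x0 + r)]
            have h3 : (x0 + r) ^ 2 + r * (x0 + r) + (r ^ 2 + a) = 0 := by
              linear_combination hx0 + (x0 * r + r ^ 2) * h2
            rw [h3, mul_zero]
      rw [hSeq]
      have hcard : ({r, x0, x0 + r} : Set F).ncard = 3 := by
        rw [Set.ncard_insert_of_notMem (by
              simp only [Set.mem_insert_iff, Set.mem_singleton_iff]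
              push_neg
              refine ⟨fun h => hx0r h.symm, fun h => hx00 ?_⟩
              · linear_combination -h) (Set.toFinite _),
            Set.ncard_pair (by
              intro h
              apply hr
              linear_combination -h)]
      rw [hcard]
      have htr0 : Algebra.trace (ZMod 2) F ((r ^ 2 + a) / r ^ 2) = 0 :=
        (quad_root_iff r (r ^ 2 + a) hr).mp ⟨x0, hx0⟩
      rw [htx, htr0]
      simp
    · have hSeq : {x : F | x ^ 3 + a * x + b = 0} = {r} := by
        ext x
        simp only [Set.mem_setOf_eq, Set.mem_singleton_iff]
        constructor
        · intro hx
          rw [hfac x] at hx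
          rcases mul_eq_zero.mp hx with h | h
          · linear_combination h - r * h2
          · exact absurd ⟨x, h⟩ hq
        · rintro rfl; exact hroot
      rw [hSeq, Set.ncard_singleton]
      have htr1 : Algebra.trace (ZMod 2) F ((r ^ 2 + a) / r ^ 2) = 1 := by
        apply zmod2_cases _
        intro h0
        exact hq ((quad_root_iff r (r ^ 2 + a) hr).mpr h0)
      rw [htx, htr1]
      simp
  · -- no roots: f irreducible, pass to AdjoinRoot
    push_neg at hex
    have hSeq : {x : F | x ^ 3 + a * x + b = 0} = ∅ := by
      ext x; simp only [Set.mem_setOf_eq, Set.mem_empty_iff_false, iff_false]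
      exact hex x
    rw [hSeq, Set.ncard_empty]
    -- show the trace is 0, via the cubic extension
    have htr0 : Algebra.trace (ZMod 2) F (a ^ 3 / b ^ 2 + 1) = 0 := by
      classical
      set f : F[X] := X ^ 3 + C a * X + C b with hf
      have hmon : f.Monic := by
        unfold f; monicity!
      have hdeg : f.natDegree = 3 := by
        unfold f; compute_degree!
      have hf0 : f ≠ 0 := hmon.ne_zero
      have heval : ∀ x : F, f.eval x = x ^ 3 + a * x + b := by
        intro x; simp [hf]
      have hirr : Irreducible f := by
        rw [hmon.irreducible_iff_roots_eq_zero_of_degree_le_three (by omega) (by omega)]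
        rw [Multiset.eq_zero_iff_forall_notMem]
        intro x hx
        rw [mem_roots hf0] at hx
        exact hex x (by rw [← heval x]; exact hx)
      haveI : Fact (Irreducible f) := ⟨hirr⟩
      set K := AdjoinRoot f with hK
      haveI : Module.Finite F K := (AdjoinRoot.powerBasis hf0).finite
      haveI : Finite K := Module.finite_of_finite F
      haveI : CharP K 2 := charP_of_injective_algebraMap (algebraMap F K).injective 2
      set r : K := AdjoinRoot.root f with hr
      set a' : K := algebraMap F K a with ha'
      set b' : K := algebraMap F K b with hb'
      have hb'0 : b' ≠ 0 := by
        rw [hb']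
        simpa using hb
      have h2K : (2 : K) = 0 := CharTwo.two_eq_zero
      have hroot' : r ^ 3 + a' * r + b' = 0 := by
        have h0 : aeval (AdjoinRoot.root f) (X ^ 3 + C a * X + C b : F[X]) = 0 := by
          rw [← hf, AdjoinRoot.aeval_eq, AdjoinRoot.mk_self]
        simp only [map_add, map_pow, map_mul, aeval_X, aeval_C] at h0
        rw [hr, ha', hb']
        exact h0
      have hr0 : r ≠ 0 := by
        intro h; apply hb'0; rw [h] at hroot'; linear_combination hroot'
      haveI := Fintype.ofFinite F
      obtain ⟨m, -, hcard⟩ := FiniteField.card F 2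
      set x1 : K := r ^ Fintype.card F with hx1
      have hfx1 : x1 ^ 3 + a' * x1 + b' = 0 := by
        have h1 : (r ^ 3 + a' * r + b') ^ Fintype.card F = 0 := by
          rw [hroot']; exact zero_pow Fintype.card_ne_zero
        rw [hcard, add_pow_char_pow, add_pow_char_pow, mul_pow] at h1
        have ha'q : a' ^ 2 ^ (m : ℕ) = a' := by
          rw [ha', ← map_pow]; congr 1; rw [← hcard]; exact FiniteField.pow_card a
        have hb'q : b' ^ 2 ^ (m : ℕ) = b' := by
          rw [hb', ← map_pow]; congr 1; rw [← hcard]; exact FiniteField.pow_card b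
        rw [ha'q, hb'q] at h1
        rw [hx1, hcard]
        calc (r ^ 2 ^ (m : ℕ)) ^ 3 + a' * r ^ 2 ^ (m : ℕ) + b'
            = (r ^ 3) ^ 2 ^ (m : ℕ) + a' * r ^ 2 ^ (m : ℕ) + b' := by
              rw [pow_right_comm]
          _ = 0 := h1
      have hx1r : x1 ≠ r := by
        intro h
        have hmin : minpoly F r = f := by
          rw [hr, AdjoinRoot.minpoly_root hf0, hmon.leadingCoeff, inv_one, map_one, mul_one]
        have hdvd : f ∣ (X ^ Fintype.card F - X : F[X]) := by
          rw [← hmin]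
          apply minpoly.dvd
          rw [map_sub, map_pow, aeval_X]
          rw [← hx1, h, sub_self]
        have hone : 1 < Fintype.card F := Fintype.one_lt_card
        have hsp : (X ^ Fintype.card F - X : F[X]).Splits := by
          rw [splits_iff_card_roots, FiniteField.roots_X_pow_card_sub_X,
            FiniteField.X_pow_card_sub_X_natDegree_eq F hone]
          simp
        have hspf : f.Splits :=
          hsp.of_dvd (FiniteField.X_pow_card_sub_X_ne_zero F hone) hdvd
        obtain ⟨x, hx⟩ := hspf.exists_eval_eq_zero
          (by rw [degree_eq_natDegree hf0, hdeg]; norm_num)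
        apply hex x
        rw [← heval x]
        simpa using hx
      have hquad : ∃ x : K, x ^ 2 + r * x + (r ^ 2 + a') = 0 := by
        refine ⟨x1, ?_⟩
        have hfac' : x1 ^ 3 + a' * x1 + b' = (x1 + r) * (x1 ^ 2 + r * x1 + (r ^ 2 + a')) := by
          linear_combination hroot' - (r ^ 3 + a' * r + r * x1 ^ 2 + r ^ 2 * x1) * h2K
        rw [hfac'] at hfx1
        rcases mul_eq_zero.mp hfx1 with h | h
        · exact absurd (by linear_combination h - r * h2K) hx1r
        · exact h
      have htr0K : Algebra.trace (ZMod 2) K ((r ^ 2 + a') / r ^ 2) = 0 :=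
        (quad_root_iff r (r ^ 2 + a') hr0).mp hquad
      have hxiK : Algebra.trace (ZMod 2) K (a' ^ 3 / b' ^ 2 + 1) = 0 :=
        (trace_xi_eq a' b' r hb'0 hroot').trans htr0K
      have halg : a' ^ 3 / b' ^ 2 + 1 = algebraMap F K (a ^ 3 / b ^ 2 + 1) := by
        rw [ha', hb', map_add, map_div₀, map_pow, map_pow, map_one]
      haveI : Module.Finite (ZMod 2) F := .of_finite
      have hfin : Module.finrank F K = 3 := by
        rw [(AdjoinRoot.powerBasis hf0).finrank]
        exact hdeg
      have htt := Algebra.trace_trace (R := ZMod 2) (S := F) (T := K)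
        (algebraMap F K (a ^ 3 / b ^ 2 + 1))
      rw [Algebra.trace_algebraMap, hfin] at htt
      rw [halg, ← htt] at hxiK
      have h3 : (3 : ℕ) • (a ^ 3 / b ^ 2 + 1) = a ^ 3 / b ^ 2 + 1 := by
        rw [nsmul_eq_mul]
        have h3' : ((3 : ℕ) : F) = 1 := by push_cast; linear_combination h2
        rw [h3', one_mul]
      rwa [h3] at hxiK
    rw [htr0]
    simp
end Cubic


lemma stmt13_core {F : Type*} [Field F] [Finite F] [CharP F 2] [Algebra (ZMod 2) F]
    (μ : F) (hμ1' : μ + 1 ≠ 0) (c : F) (hc : c ≠ 0) :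
    ({t : F | t ^ 3 + c * t ^ 2 + t + μ * c = 0} : Set F).ncard = 1 ↔
      Algebra.trace (ZMod 2) F
        ((1 + μ * c ^ 4) / (c ^ 2 * (μ + 1) ^ 2) + μ / (μ + 1)) = 1 := by
  have h2 : (2 : F) = 0 := CharTwo.two_eq_zero
  have hset : {t : F | t ^ 3 + c * t ^ 2 + t + μ * c = 0}
      = (fun s => s + c) '' {s : F | s ^ 3 + (c ^ 2 + 1) * s + c * (μ + 1) = 0} := by
    ext t
    simp only [Set.mem_setOf_eq, Set.mem_image]
    constructor
    · intro ht
      exact ⟨t + c, by linear_combination ht + (c * t ^ 2 + 2 * c ^ 2 * t + c ^ 3 + c) * h2,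
        by linear_combination c * h2⟩
    · rintro ⟨s, hs, rfl⟩
      linear_combination hs + (2 * s ^ 2 * c + 2 * s * c ^ 2 + c ^ 3) * h2
  have hb : c * (μ + 1) ≠ 0 := mul_ne_zero hc hμ1'
  rw [hset, Set.ncard_image_of_injective _ (add_left_injective c),
    cubic_count (c ^ 2 + 1) (c * (μ + 1)) hb]
  have harg : (1 + μ * c ^ 4) / (c ^ 2 * (μ + 1) ^ 2) + μ / (μ + 1)
      = ((c ^ 2 + 1) ^ 3 / (c * (μ + 1)) ^ 2 + 1)
        + (((c ^ 2 + 1) / (μ + 1)) ^ 2 + (c ^ 2 + 1) / (μ + 1)) := by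
    field_simp
    linear_combination (-(μ*c^2) - 3*c^2 - 3*c^4 - c^6) * h2
  have hAS : Algebra.trace (ZMod 2) F
      (((c ^ 2 + 1) / (μ + 1)) ^ 2 + (c ^ 2 + 1) / (μ + 1)) = 0 :=
    (as_iff _).mp ⟨_, rfl⟩
  have htreq : Algebra.trace (ZMod 2) F
        ((1 + μ * c ^ 4) / (c ^ 2 * (μ + 1) ^ 2) + μ / (μ + 1))
      = Algebra.trace (ZMod 2) F ((c ^ 2 + 1) ^ 3 / (c * (μ + 1)) ^ 2 + 1) := by
    rw [harg, map_add, hAS, add_zero]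
  rw [htreq]

/-- Let `q = 2^n ≥ 8` be an even prime power and `μ ∈ F_q^*`, `μ ≠ 1`.
Then the number of `c ∈ F_q^*` such that `t³ + ct² + t + μc` has exactly one root in `F_q`
equals the number of `c ∈ F_q^*` with `Tr((1 + μc⁴)/(c²(μ+1)²) + μ/(μ+1)) = 1`, where
`Tr` is the absolute trace `F_q → F_2`. -/
theorem stmt13 (n : ℕ) (hn : 3 ≤ n) (μ : GaloisField 2 n) (hμ0 : μ ≠ 0) (hμ1 : μ ≠ 1) :
    Set.ncard {c : GaloisField 2 n | c ≠ 0 ∧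
        ({t : GaloisField 2 n | t ^ 3 + c * t ^ 2 + t + μ * c = 0} :
          Set (GaloisField 2 n)).ncard = 1}
      = Set.ncard {c : GaloisField 2 n | c ≠ 0 ∧
          Algebra.trace (ZMod 2) (GaloisField 2 n)
            ((1 + μ * c ^ 4) / (c ^ 2 * (μ + 1) ^ 2) + μ / (μ + 1)) = 1} := by
  have h2 : (2 : GaloisField 2 n) = 0 := CharTwo.two_eq_zero
  have hμ1' : μ + 1 ≠ 0 := by
    intro h; apply hμ1; linear_combination h - h2
  have hsets : {c : GaloisField 2 n | c ≠ 0 ∧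
        ({t : GaloisField 2 n | t ^ 3 + c * t ^ 2 + t + μ * c = 0} :
          Set (GaloisField 2 n)).ncard = 1}
      = {c : GaloisField 2 n | c ≠ 0 ∧
          Algebra.trace (ZMod 2) (GaloisField 2 n)
            ((1 + μ * c ^ 4) / (c ^ 2 * (μ + 1) ^ 2) + μ / (μ + 1)) = 1} := by
    ext c
    simp only [Set.mem_setOf_eq]
    exact and_congr_right fun hc => stmt13_core μ hμ1' c hc
  rw [hsets]
end
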